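/- arXiv:2212.06325 — 4 statements merged into one kernel-verified Lean document; each statement's English description precedes it below -/
import Mathlib

section
/- Let F : ℝ^d → ℝ be differentiable with gradient ∇F. Suppose F is μ-strongly convex and ∇F is L-Lipschitz with 0 < μ ≤ L, and θ* is a point with ∇F(θ*) = 0. If the step size η satisfies 0 < η ≤ 2/(μ + L), then for every θ ∈ ℝ^d: ‖θ − η∇F(θ) − θ*‖ ≤ √(1 − 2ημL/(μ + L)) · ‖θ − θ*‖. -/
open RealInnerProductSpace


variable {d : ℕ}

-- derivative of F along a segment
lemma line_hasDerivAt (F : EuclideanSpace ℝ (Fin d) → ℝ)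
    (gradF : EuclideanSpace ℝ (Fin d) → EuclideanSpace ℝ (Fin d))
    (hdiff : ∀ θ, HasGradientAt F (gradF θ) θ)
    (x u : EuclideanSpace ℝ (Fin d)) (t : ℝ) :
    HasDerivAt (fun s : ℝ => F (x + s • u)) ⟪gradF (x + t • u), u⟫ t := by
  have hγ : HasDerivAt (fun s : ℝ => x + s • u) u t := by
    simpa using ((hasDerivAt_id t).smul_const u).const_add x
  have hF := (hdiff (x + t • u)).hasFDerivAt
  have := hF.comp_hasDerivAt t hγ
  simp [InnerProductSpace.toDual_apply_apply] at this
  exact this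

lemma descent (F : EuclideanSpace ℝ (Fin d) → ℝ)
    (gradF : EuclideanSpace ℝ (Fin d) → EuclideanSpace ℝ (Fin d))
    (hdiff : ∀ θ, HasGradientAt F (gradF θ) θ)
    (L : ℝ) (hL : 0 ≤ L)
    (hlip : ∀ θ θ' : EuclideanSpace ℝ (Fin d),
      ‖gradF θ - gradF θ'‖ ≤ L * ‖θ - θ'‖)
    (x y : EuclideanSpace ℝ (Fin d)) :
    F y ≤ F x + ⟪gradF x, y - x⟫ + L / 2 * ‖y - x‖ ^ 2 := by
  set u := y - x with hu
  have hcontg : Continuous gradF := by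
    have : LipschitzWith (Real.toNNReal L) gradF := by
      apply LipschitzWith.of_dist_le_mul
      intro a b
      simpa [dist_eq_norm, Real.coe_toNNReal _ hL] using hlip a b
    exact this.continuous
  have hcont : Continuous (fun t : ℝ => ⟪gradF (x + t • u), u⟫) := by
    exact (hcontg.comp (by continuity)).inner continuous_const
  have hftc : ∫ t in (0:ℝ)..1, ⟪gradF (x + t • u), u⟫ = F y - F x := by
    have := intervalIntegral.integral_eq_sub_of_hasDerivAt
      (f := fun s : ℝ => F (x + s • u))
      (f' := fun t : ℝ => ⟪gradF (x + t • u), u⟫)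
      (a := 0) (b := 1)
      (fun t _ => line_hasDerivAt F gradF hdiff x u t)
      (hcont.intervalIntegrable 0 1)
    simpa [hu] using this
  have hbound : ∫ t in (0:ℝ)..1, ⟪gradF (x + t • u), u⟫ ≤
      ⟪gradF x, u⟫ + L / 2 * ‖u‖ ^ 2 := by
    have hmono : ∫ t in (0:ℝ)..1, ⟪gradF (x + t • u), u⟫ ≤
        ∫ t in (0:ℝ)..1, (⟪gradF x, u⟫ + L * t * ‖u‖ ^ 2) := by
      apply intervalIntegral.integral_mono_on (by norm_num)
        (hcont.intervalIntegrable 0 1)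
        ((by continuity : Continuous
          (fun t : ℝ => ⟪gradF x, u⟫ + L * t * ‖u‖ ^ 2)).intervalIntegrable 0 1)
      intro t ht
      have h1 : ⟪gradF (x + t • u) - gradF x, u⟫ ≤ L * t * ‖u‖ ^ 2 := by
        calc ⟪gradF (x + t • u) - gradF x, u⟫ ≤ ‖gradF (x + t • u) - gradF x‖ * ‖u‖ :=
              real_inner_le_norm _ _
          _ ≤ (L * ‖(x + t • u) - x‖) * ‖u‖ := by
              gcongr; exact hlip _ _
          _ = L * t * ‖u‖ ^ 2 := by
              rw [add_sub_cancel_left, norm_smul]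
              simp [abs_of_nonneg ht.1]
              ring
      have := inner_sub_left (𝕜 := ℝ) (gradF (x + t • u)) (gradF x) u
      linarith [this ▸ h1]
    have hint : ∫ t in (0:ℝ)..1, (⟪gradF x, u⟫ + L * t * ‖u‖ ^ 2) =
        ⟪gradF x, u⟫ + L / 2 * ‖u‖ ^ 2 := by
      have h2 : ∫ t in (0:ℝ)..1, L * t * ‖u‖ ^ 2 = L / 2 * ‖u‖ ^ 2 := by
        have : ∫ t in (0:ℝ)..1, L * t * ‖u‖ ^ 2 = L * (∫ t in (0:ℝ)..1, t) * ‖u‖ ^ 2 := by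
          rw [← intervalIntegral.integral_const_mul, ← intervalIntegral.integral_mul_const]

        rw [this, integral_id]; ring
      rw [intervalIntegral.integral_add intervalIntegrable_const
          (((by continuity : Continuous (fun t : ℝ => L * t * ‖u‖ ^ 2))).intervalIntegrable 0 1),
        h2]
      simp
    linarith [hint ▸ hmono]
  linarith [hftc ▸ hbound]

lemma coco {d : ℕ} (g : EuclideanSpace ℝ (Fin d) → EuclideanSpace ℝ (Fin d))
    (h : EuclideanSpace ℝ (Fin d) → ℝ) (c : ℝ) (hc : 0 < c)
    (hcvx : ∀ x y, h x + ⟪g x, y - x⟫ ≤ h y)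
    (hdesc : ∀ x y, h y ≤ h x + ⟪g x, y - x⟫ + c / 2 * ‖y - x‖ ^ 2)
    (x y : EuclideanSpace ℝ (Fin d)) :
    ‖g x - g y‖ ^ 2 ≤ c * ⟪g x - g y, x - y⟫ := by
  have hc' : c ≠ 0 := ne_of_gt hc
  have half : ∀ x y : EuclideanSpace ℝ (Fin d),
      h x + ⟪g x, y - x⟫ + 1 / (2 * c) * ‖g y - g x‖ ^ 2 ≤ h y := by
    intro x y
    set z := y - (1 / c) • (g y - g x) with hzdef
    have hd := hdesc y z
    have hx := hcvx x z
    have hz : z - y = -((1 / c) • (g y - g x)) := by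
      rw [hzdef]; abel
    have e1 : ⟪g y, z - y⟫ = -(1 / c * ⟪g y, g y - g x⟫) := by
      rw [hz, inner_neg_right, real_inner_smul_right]
    have e2 : ‖z - y‖ ^ 2 = (1 / c) ^ 2 * ‖g y - g x‖ ^ 2 := by
      rw [hz, norm_neg, norm_smul]
      rw [mul_pow, Real.norm_eq_abs, sq_abs]
    have e3 : ⟪g x, z - x⟫ = ⟪g x, y - x⟫ - 1 / c * ⟪g x, g y - g x⟫ := by
      have hzx : z - x = (y - x) - (1 / c) • (g y - g x) := by rw [hzdef]; abel
      rw [hzx, inner_sub_right, real_inner_smul_right]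
    have e4 : ⟪g y, g y - g x⟫ - ⟪g x, g y - g x⟫ = ‖g y - g x‖ ^ 2 := by
      rw [← inner_sub_left, real_inner_self_eq_norm_sq]
    have k1 : c / 2 * (1 / c) ^ 2 = 1 / (2 * c) := by field_simp
    have k2 : (1 : ℝ) / c - 1 / (2 * c) = 1 / (2 * c) := by field_simp; ring
    rw [e1, e2] at hd
    rw [e3] at hx
    have k1' : c / 2 * ((1 / c) ^ 2 * ‖g y - g x‖ ^ 2) = 1 / (2 * c) * ‖g y - g x‖ ^ 2 := by
      rw [← mul_assoc, k1]
    have e4' : 1 / c * ⟪g y, g y - g x⟫ - 1 / c * ⟪g x, g y - g x⟫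
        = 1 / c * ‖g y - g x‖ ^ 2 := by
      rw [← mul_sub, e4]
    have k2' : 1 / c * ‖g y - g x‖ ^ 2 - 1 / (2 * c) * ‖g y - g x‖ ^ 2
        = 1 / (2 * c) * ‖g y - g x‖ ^ 2 := by
      rw [← sub_mul, k2]
    linarith [hd, hx, e4', k1', k2']
  have h1 := half x y
  have h2 := half y x
  have e5 : ⟪g x, y - x⟫ = -⟪g x, x - y⟫ := by
    rw [← inner_neg_right]; congr 1; abel
  have e6 : ‖g y - g x‖ = ‖g x - g y‖ := norm_sub_rev _ _
  have e7 : ⟪g y, x - y⟫ - ⟪g x, x - y⟫ = -⟪g x - g y, x - y⟫ := by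
    rw [← inner_sub_left]
    rw [show g y - g x = -(g x - g y) by abel, inner_neg_left]
  have key : 1 / c * ‖g x - g y‖ ^ 2 ≤ ⟪g x - g y, x - y⟫ := by
    rw [e6] at h1
    have k3 : 1 / (2 * c) * ‖g x - g y‖ ^ 2 + 1 / (2 * c) * ‖g x - g y‖ ^ 2
        = 1 / c * ‖g x - g y‖ ^ 2 := by
      ring
    linarith [h1, h2, e5, e7, k3]
  calc ‖g x - g y‖ ^ 2 = c * (1 / c * ‖g x - g y‖ ^ 2) := by field_simp
    _ ≤ c * ⟪g x - g y, x - y⟫ := by exact mul_le_mul_of_nonneg_left key (le_of_lt hc)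

/-- Lemma 2 of the paper: one gradient-descent step on a `μ`-strongly convex function
with `L`-Lipschitz gradient contracts the distance to the minimizer `θ*` by the factor
`√(1 − 2ημL/(μ+L))`, provided `0 < η ≤ 2/(μ+L)`. -/
theorem gradient_step_contraction
    (d : ℕ) (F : EuclideanSpace ℝ (Fin d) → ℝ)
    (gradF : EuclideanSpace ℝ (Fin d) → EuclideanSpace ℝ (Fin d))
    (hdiff : ∀ θ, HasGradientAt F (gradF θ) θ)
    (μ L : ℝ) (hμ : 0 < μ) (hμL : μ ≤ L)
    (hstrong : ∀ θ θ' : EuclideanSpace ℝ (Fin d),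
      F θ + ⟪gradF θ, θ' - θ⟫ + μ / 2 * ‖θ' - θ‖ ^ 2 ≤ F θ')
    (hlip : ∀ θ θ' : EuclideanSpace ℝ (Fin d),
      ‖gradF θ - gradF θ'‖ ≤ L * ‖θ - θ'‖)
    (θstar : EuclideanSpace ℝ (Fin d)) (hθstar : gradF θstar = 0)
    (η : ℝ) (hη0 : 0 < η) (hη : η ≤ 2 / (μ + L))
    (θ : EuclideanSpace ℝ (Fin d)) :
    ‖θ - η • gradF θ - θstar‖ ≤
      Real.sqrt (1 - 2 * η * μ * L / (μ + L)) * ‖θ - θstar‖ := by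
  have hL : 0 < L := lt_of_lt_of_le hμ hμL
  set a := gradF θ with ha
  set b := θ - θstar with hb
  have hS : (0:ℝ) < μ + L := by linarith
  have hηS : η * (μ + L) ≤ 2 := by
    rw [← le_div_iff₀ hS]; exact hη
  -- key coercivity inequality
  have key : ‖a‖ ^ 2 + μ * L * ‖b‖ ^ 2 ≤ (μ + L) * ⟪a, b⟫ := by
    rcases eq_or_lt_of_le hμL with hEq | hLt
    · -- μ = L
      have hs1 := hstrong θ θstar
      have hs2 := hstrong θstar θ
      rw [hθstar, inner_zero_left] at hs2
      have e1 : ⟪gradF θ, θstar - θ⟫ = -⟪a, b⟫ := by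
        rw [show θstar - θ = -(θ - θstar) by abel, inner_neg_right, ← ha, ← hb]
      rw [e1, show ‖θstar - θ‖ = ‖b‖ from by rw [hb, norm_sub_rev]] at hs1
      have hmono : μ * ‖b‖ ^ 2 ≤ ⟪a, b⟫ := by
        rw [← hb] at hs2; linarith
      have hsq : ‖a‖ ^ 2 ≤ L ^ 2 * ‖b‖ ^ 2 := by
        have h0 : ‖a‖ ≤ L * ‖b‖ := by
          have := hlip θ θstar
          rwa [hθstar, sub_zero, ← ha, ← hb] at this
        have := pow_le_pow_left₀ (norm_nonneg a) h0 2
        calc ‖a‖ ^ 2 ≤ (L * ‖b‖) ^ 2 := this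
          _ = L ^ 2 * ‖b‖ ^ 2 := by ring
      have := mul_le_mul_of_nonneg_left hmono (le_of_lt hL)
      rw [← hEq] at *
      nlinarith [this, hsq]
    · -- μ < L
      set g' : EuclideanSpace ℝ (Fin d) → EuclideanSpace ℝ (Fin d) :=
        fun w => gradF w - μ • w with hg'
      set h' : EuclideanSpace ℝ (Fin d) → ℝ := fun w => F w - μ / 2 * ‖w‖ ^ 2 with hh'
      have e1 : ∀ x y : EuclideanSpace ℝ (Fin d),
          ⟪g' x, y - x⟫ = ⟪gradF x, y - x⟫ - μ * (⟪x, y⟫ - ‖x‖ ^ 2) := by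
        intro x y
        rw [hg']
        simp only [inner_sub_left, inner_sub_right, real_inner_smul_left,
          real_inner_self_eq_norm_sq]
        ring
      have hcvx' : ∀ x y, h' x + ⟪g' x, y - x⟫ ≤ h' y := by
        intro x y
        have hs := hstrong x y
        rw [show ‖y - x‖ ^ 2 = ‖y‖ ^ 2 - 2 * ⟪y, x⟫ + ‖x‖ ^ 2 from norm_sub_sq_real y x] at hs
        have e4' : μ * ⟪x, y⟫ = μ * ⟪y, x⟫ := by rw [real_inner_comm]
        rw [hh']; dsimp only; rw [e1]
        linarith [hs, e4']
      have hdesc' : ∀ x y, h' y ≤ h' x + ⟪g' x, y - x⟫ + (L - μ) / 2 * ‖y - x‖ ^ 2 := by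
        intro x y
        have hs := descent F gradF hdiff L (le_of_lt hL) hlip x y
        rw [show ‖y - x‖ ^ 2 = ‖y‖ ^ 2 - 2 * ⟪y, x⟫ + ‖x‖ ^ 2 from norm_sub_sq_real y x] at hs ⊢
        have e4' : μ * ⟪x, y⟫ = μ * ⟪y, x⟫ := by rw [real_inner_comm]
        rw [hh']; dsimp only; rw [e1]
        linarith [hs, e4']
      have hco := coco g' h' (L - μ) (by linarith) hcvx' hdesc' θ θstar
      have egg : g' θ - g' θstar = a - μ • b := by
        rw [hg']; dsimp only; rw [hθstar, ← ha, hb, smul_sub]; abel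
      rw [egg] at hco
      have e2 : ‖a - μ • b‖ ^ 2 = ‖a‖ ^ 2 - 2 * μ * ⟪a, b⟫ + μ ^ 2 * ‖b‖ ^ 2 := by
        rw [norm_sub_sq_real, real_inner_smul_right, norm_smul, mul_pow,
          Real.norm_eq_abs, sq_abs]
        ring
      have e3 : ⟪a - μ • b, θ - θstar⟫ = ⟪a, b⟫ - μ * ‖b‖ ^ 2 := by
        rw [← hb, inner_sub_left, real_inner_smul_left, real_inner_self_eq_norm_sq]
      rw [e2, e3] at hco
      nlinarith [hco]
  -- contraction of the squared norm
  have hexp : ‖b - η • a‖ ^ 2 = ‖b‖ ^ 2 - 2 * η * ⟪a, b⟫ + η ^ 2 * ‖a‖ ^ 2 := by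
    rw [norm_sub_sq_real, real_inner_smul_right, norm_smul, mul_pow,
      Real.norm_eq_abs, sq_abs, real_inner_comm]
    ring
  have hqS : (μ + L) * ‖b - η • a‖ ^ 2 ≤ ((μ + L) - 2 * η * μ * L) * ‖b‖ ^ 2 := by
    have t1 : 2 * η * (‖a‖ ^ 2 + μ * L * ‖b‖ ^ 2) ≤ 2 * η * ((μ + L) * ⟪a, b⟫) :=
      mul_le_mul_of_nonneg_left key (by positivity)
    have t2 : 0 ≤ η * (2 - η * (μ + L)) * ‖a‖ ^ 2 :=
      mul_nonneg (mul_nonneg hη0.le (by linarith)) (sq_nonneg _)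
    rw [hexp]
    nlinarith [t1, t2]
  have hfac : (0:ℝ) ≤ 1 - 2 * η * μ * L / (μ + L) := by
    rw [sub_nonneg, div_le_one hS]
    nlinarith [mul_le_mul_of_nonneg_left hηS (by positivity : (0:ℝ) ≤ 2 * μ * L),
      sq_nonneg (μ - L), hS]
  have hq : ‖b - η • a‖ ^ 2 ≤ (1 - 2 * η * μ * L / (μ + L)) * ‖b‖ ^ 2 := by
    have e : (1 - 2 * η * μ * L / (μ + L)) = ((μ + L) - 2 * η * μ * L) / (μ + L) := by
      field_simp
    rw [e, div_mul_eq_mul_div, le_div_iff₀ hS]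
    linarith [hqS]
  have heq : θ - η • gradF θ - θstar = b - η • a := by
    rw [← ha, hb]; abel
  rw [heq]
  calc ‖b - η • a‖ = Real.sqrt (‖b - η • a‖ ^ 2) := (Real.sqrt_sq (norm_nonneg _)).symm
    _ ≤ Real.sqrt ((1 - 2 * η * μ * L / (μ + L)) * ‖b‖ ^ 2) := Real.sqrt_le_sqrt hq
    _ = Real.sqrt (1 - 2 * η * μ * L / (μ + L)) * ‖b‖ := by
        rw [Real.sqrt_mul hfac, Real.sqrt_sq (norm_nonneg _)]
end

section
/- Let F : ℝ^d → ℝ be differentiable with gradient ∇F, μ-strongly convex with L-Lipschitz gradient (0 < μ ≤ L), and let θ* satisfy ∇F(θ*) = 0. Let λ > 0, Λ ≥ 0, Γ ≥ 0, and 0 < η ≤ 2/(μ + L). Let θ ∈ ℝ^d and let ḡ ∈ ℝ^d satisfy ‖ḡ − ∇F(θ)‖ ≤ 8Λ‖θ − θ*‖ + 4Γ. If g ∈ ℝ^d satisfies the acceptance criterion ‖g − ḡ‖ ≤ λ‖ḡ‖, then the next iterate θ⁺ = θ − ηg satisfies ‖θ⁺ − θ*‖ ≤ (√(1 − 2ημL/(μ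 + L)) + ηLλ + 8ηΛ(λ + 1)) · ‖θ − θ*‖ + 4ηΓ(λ + 1). -/
open RealInnerProductSpace

section Aux

variable {d : ℕ}

private lemma aflg_norm_sub_smul_sq (g dd : EuclideanSpace ℝ (Fin d)) (c : ℝ) :
    ‖g - c • dd‖ ^ 2 = ‖g‖ ^ 2 - 2 * c * ⟪g, dd⟫ + c ^ 2 * ‖dd‖ ^ 2 := by
  rw [norm_sub_sq_real, real_inner_smul_right, norm_smul, Real.norm_eq_abs, mul_pow, sq_abs]
  ring

private lemma aflg_norm_expand (a b : EuclideanSpace ℝ (Fin d)) :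
    ‖b‖ ^ 2 = ‖a‖ ^ 2 + 2 * ⟪a, b - a⟫ + ‖b - a‖ ^ 2 := by
  have h := norm_add_sq_real a (b - a)
  have hab : a + (b - a) = b := by abel
  rw [hab] at h
  linarith

private lemma aflg_line_deriv (F : EuclideanSpace ℝ (Fin d) → ℝ)
    (gradF : EuclideanSpace ℝ (Fin d) → EuclideanSpace ℝ (Fin d))
    (hdiff : ∀ θ, HasGradientAt F (gradF θ) θ)
    (x v : EuclideanSpace ℝ (Fin d)) (t : ℝ) :
    HasDerivAt (fun s : ℝ => F (x + s • v)) ⟪gradF (x + t • v), v⟫ t := by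
  have hline : HasDerivAt (fun s : ℝ => x + s • v) v t := by
    simpa using ((hasDerivAt_id t).smul_const v).const_add x
  simpa [InnerProductSpace.toDual_apply_apply, Function.comp_def] using
    ((hdiff (x + t • v)).hasFDerivAt.comp_hasDerivAt t hline)

private lemma aflg_descent (F : EuclideanSpace ℝ (Fin d) → ℝ)
    (gradF : EuclideanSpace ℝ (Fin d) → EuclideanSpace ℝ (Fin d))
    (hdiff : ∀ θ, HasGradientAt F (gradF θ) θ) (L : ℝ)
    (hlip : ∀ θ θ' : EuclideanSpace ℝ (Fin d),
      ‖gradF θ - gradF θ'‖ ≤ L * ‖θ - θ'‖)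
    (x y : EuclideanSpace ℝ (Fin d)) :
    F y ≤ F x + ⟪gradF x, y - x⟫ + L / 2 * ‖y - x‖ ^ 2 := by
  set v := y - x with hv
  set f : ℝ → ℝ := fun t => F (x + t • v) - t * ⟪gradF x, v⟫ - L / 2 * t ^ 2 * ‖v‖ ^ 2 with hf
  have hder : ∀ t : ℝ, HasDerivAt f
      (⟪gradF (x + t • v), v⟫ - ⟪gradF x, v⟫ - L * t * ‖v‖ ^ 2) t := by
    intro t
    have h1 := aflg_line_deriv F gradF hdiff x v t
    have h2 : HasDerivAt (fun s : ℝ => s * ⟪gradF x, v⟫) ⟪gradF x, v⟫ t := by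
      simpa using (hasDerivAt_id t).mul_const (⟪gradF x, v⟫)
    have h3 : HasDerivAt (fun s : ℝ => L / 2 * s ^ 2 * ‖v‖ ^ 2) (L * t * ‖v‖ ^ 2) t := by
      have := ((hasDerivAt_pow 2 t).const_mul (L / 2)).mul_const (‖v‖ ^ 2)
      refine this.congr_deriv ?_
      ring
    exact (h1.sub h2).sub h3
  have hmono : AntitoneOn f (Set.Icc (0:ℝ) 1) := by
    apply antitoneOn_of_deriv_nonpos (convex_Icc 0 1)
    · exact fun t _ => ((hder t).continuousAt).continuousWithinAt
    · exact fun t _ => ((hder t).differentiableAt).differentiableWithinAt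
    · intro t ht
      rw [interior_Icc] at ht
      rw [(hder t).deriv]
      have hb : ⟪gradF (x + t • v) - gradF x, v⟫ ≤ ‖gradF (x + t • v) - gradF x‖ * ‖v‖ :=
        real_inner_le_norm _ _
      have hl : ‖gradF (x + t • v) - gradF x‖ ≤ L * (t * ‖v‖) := by
        have := hlip (x + t • v) x
        simpa [norm_smul, abs_of_pos ht.1, mul_assoc] using this
      have hv0 : (0:ℝ) ≤ ‖v‖ := norm_nonneg _
      have : ⟪gradF (x + t • v), v⟫ - ⟪gradF x, v⟫ ≤ L * t * ‖v‖ ^ 2 := by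
        rw [← inner_sub_left]
        calc ⟪gradF (x + t • v) - gradF x, v⟫ ≤ ‖gradF (x + t • v) - gradF x‖ * ‖v‖ := hb
          _ ≤ L * (t * ‖v‖) * ‖v‖ := mul_le_mul_of_nonneg_right hl hv0
          _ = L * t * ‖v‖ ^ 2 := by ring
      linarith
  have h01 := hmono (Set.left_mem_Icc.2 zero_le_one) (Set.right_mem_Icc.2 zero_le_one) zero_le_one
  simp only [hf] at h01
  simp only [zero_smul, add_zero, one_smul, one_pow, mul_one, zero_pow, mul_zero, zero_mul,
    sub_zero] at h01
  have hxy : x + v = y := by rw [hv]; abel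
  rw [hxy] at h01
  linarith

private lemma aflg_coercive (F : EuclideanSpace ℝ (Fin d) → ℝ)
    (gradF : EuclideanSpace ℝ (Fin d) → EuclideanSpace ℝ (Fin d))
    (hdiff : ∀ θ, HasGradientAt F (gradF θ) θ)
    (μ L : ℝ) (hμ : 0 < μ) (hμL : μ ≤ L)
    (hstrong : ∀ θ θ' : EuclideanSpace ℝ (Fin d),
      F θ + ⟪gradF θ, θ' - θ⟫ + μ / 2 * ‖θ' - θ‖ ^ 2 ≤ F θ')
    (hlip : ∀ θ θ' : EuclideanSpace ℝ (Fin d),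
      ‖gradF θ - gradF θ'‖ ≤ L * ‖θ - θ'‖)
    (x y : EuclideanSpace ℝ (Fin d)) :
    μ * L / (μ + L) * ‖x - y‖ ^ 2 + 1 / (μ + L) * ‖gradF x - gradF y‖ ^ 2
      ≤ ⟪gradF x - gradF y, x - y⟫ := by
  have hμL0 : 0 < μ + L := by linarith
  have hgoal : μ * L * ‖x - y‖ ^ 2 + ‖gradF x - gradF y‖ ^ 2
      ≤ ⟪gradF x - gradF y, x - y⟫ * (μ + L) → μ * L / (μ + L) * ‖x - y‖ ^ 2
        + 1 / (μ + L) * ‖gradF x - gradF y‖ ^ 2 ≤ ⟪gradF x - gradF y, x - y⟫ := by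
    intro h
    rw [div_mul_eq_mul_div, div_mul_eq_mul_div, ← add_div, div_le_iff₀ hμL0]
    linarith
  apply hgoal
  rcases eq_or_lt_of_le hμL with heq | hlt
  · -- μ = L
    subst heq
    have hn : ‖gradF x - gradF y‖ ≤ μ * ‖x - y‖ := hlip x y
    have hmono : μ * ‖x - y‖ ^ 2 ≤ ⟪gradF x - gradF y, x - y⟫ := by
      have h1 := hstrong x y
      have h2 := hstrong y x
      have e1 : ⟪gradF x - gradF y, x - y⟫
          = -⟪gradF x, y - x⟫ - ⟪gradF y, x - y⟫ := by
        rw [inner_sub_left, show y - x = -(x - y) from by abel, inner_neg_right]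
        ring
      have enorm : ‖y - x‖ = ‖x - y‖ := norm_sub_rev _ _
      rw [e1]
      rw [enorm] at h1
      linarith
    have hz : ‖(gradF x - gradF y) - μ • (x - y)‖ ^ 2 ≤ 0 := by
      rw [aflg_norm_sub_smul_sq]
      nlinarith [norm_nonneg (gradF x - gradF y), norm_nonneg (x - y)]
    have hz0 : ‖(gradF x - gradF y) - μ • (x - y)‖ ^ 2 = 0 := le_antisymm hz (by positivity)
    have hexp := aflg_norm_sub_smul_sq (gradF x - gradF y) (x - y) μ
    rw [hz0] at hexp
    nlinarith [hexp]
  · -- μ < L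
    have hL'0 : 0 < L - μ := by linarith
    set Gf : EuclideanSpace ℝ (Fin d) → ℝ := fun z => F z - μ / 2 * ‖z‖ ^ 2 with hGf
    set Gg : EuclideanSpace ℝ (Fin d) → EuclideanSpace ℝ (Fin d) :=
      fun z => gradF z - μ • z with hGg
    have key : ∀ a b : EuclideanSpace ℝ (Fin d),
        ⟪Gg a, b - a⟫ = ⟪gradF a, b - a⟫ - μ * ⟪a, b - a⟫ := by
      intro a b
      show ⟪gradF a - μ • a, b - a⟫ = _
      rw [inner_sub_left, real_inner_smul_left]
    have hconv : ∀ a b, Gf a + ⟪Gg a, b - a⟫ ≤ Gf b := by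
      intro a b
      have h := hstrong a b
      have hn := aflg_norm_expand a b
      show F a - μ / 2 * ‖a‖ ^ 2 + ⟪Gg a, b - a⟫ ≤ F b - μ / 2 * ‖b‖ ^ 2
      rw [key a b]
      nlinarith [h, hn]
    have hdesc : ∀ a b, Gf b ≤ Gf a + ⟪Gg a, b - a⟫ + (L - μ) / 2 * ‖b - a‖ ^ 2 := by
      intro a b
      have h := aflg_descent F gradF hdiff L hlip a b
      have hn := aflg_norm_expand a b
      show F b - μ / 2 * ‖b‖ ^ 2 ≤ F a - μ / 2 * ‖a‖ ^ 2 + ⟪Gg a, b - a⟫ + _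
      rw [key a b]
      nlinarith [h, hn]
    have hhalf : ∀ a b,
        Gf a + ⟪Gg a, b - a⟫ + 1 / (2 * (L - μ)) * ‖Gg b - Gg a‖ ^ 2 ≤ Gf b := by
      intro a b
      set z := b - (1 / (L - μ)) • (Gg b - Gg a) with hz
      have h1 := hconv a z
      have h2 := hdesc b z
      have hzb : z - b = -((1 / (L - μ)) • (Gg b - Gg a)) := by rw [hz]; abel
      have hza : z - a = (b - a) - (1 / (L - μ)) • (Gg b - Gg a) := by rw [hz]; abel
      have e2 : ⟪Gg b, z - b⟫ = -(1 / (L - μ) * ⟪Gg b, Gg b - Gg a⟫) := by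
        rw [hzb, inner_neg_right, real_inner_smul_right]
      have e3 : (L - μ) / 2 * ‖z - b‖ ^ 2 = 1 / (2 * (L - μ)) * ‖Gg b - Gg a‖ ^ 2 := by
        rw [hzb, norm_neg, norm_smul, Real.norm_eq_abs,
          abs_of_pos (by positivity : (0:ℝ) < 1 / (L - μ)), mul_pow]
        field_simp
      have e4 : ⟪Gg a, z - a⟫ = ⟪Gg a, b - a⟫ - 1 / (L - μ) * ⟪Gg a, Gg b - Gg a⟫ := by
        rw [hza, inner_sub_right, real_inner_smul_right]
      have e5 : 1 / (L - μ) * ⟪Gg b, Gg b - Gg a⟫ - 1 / (L - μ) * ⟪Gg a, Gg b - Gg a⟫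
          = 1 / (L - μ) * ‖Gg b - Gg a‖ ^ 2 := by
        rw [← mul_sub, ← inner_sub_left, real_inner_self_eq_norm_sq]
      rw [e4] at h1
      rw [e2, e3] at h2
      have efin : 1 / (L - μ) * ‖Gg b - Gg a‖ ^ 2
          = 2 * (1 / (2 * (L - μ)) * ‖Gg b - Gg a‖ ^ 2) := by
        field_simp
      linarith [h1, h2, e5]
    clear_value Gf Gg
    have h1 := hhalf x y
    have h2 := hhalf y x
    have hre : ⟪Gg y, x - y⟫ + ⟪Gg x, y - x⟫ = - ⟪Gg x - Gg y, x - y⟫ := by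
      rw [inner_sub_left, show y - x = -(x - y) from by abel, inner_neg_right]
      ring
    have hsymm : ‖Gg y - Gg x‖ = ‖Gg x - Gg y‖ := norm_sub_rev _ _
    rw [hsymm] at h1
    have hco : 1 / (L - μ) * ‖Gg x - Gg y‖ ^ 2 ≤ ⟪Gg x - Gg y, x - y⟫ := by
      have efin : 1 / (L - μ) * ‖Gg x - Gg y‖ ^ 2
          = 2 * (1 / (2 * (L - μ)) * ‖Gg x - Gg y‖ ^ 2) := by field_simp
      linarith [h1, h2, hre]
    have hGgd : Gg x - Gg y = (gradF x - gradF y) - μ • (x - y) := by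
      simp only [hGg]
      module
    have hip : ⟪Gg x - Gg y, x - y⟫ = ⟪gradF x - gradF y, x - y⟫ - μ * ‖x - y‖ ^ 2 := by
      rw [hGgd, inner_sub_left, real_inner_smul_left, real_inner_self_eq_norm_sq]
    have hnrm : ‖Gg x - Gg y‖ ^ 2 = ‖gradF x - gradF y‖ ^ 2
        - 2 * μ * ⟪gradF x - gradF y, x - y⟫ + μ ^ 2 * ‖x - y‖ ^ 2 := by
      rw [hGgd, aflg_norm_sub_smul_sq]
    rw [hip, hnrm] at hco
    have hco' : ‖gradF x - gradF y‖ ^ 2 - 2 * μ * ⟪gradF x - gradF y, x - y⟫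
        + μ ^ 2 * ‖x - y‖ ^ 2
        ≤ (L - μ) * (⟪gradF x - gradF y, x - y⟫ - μ * ‖x - y‖ ^ 2) := by
      rw [one_div_mul_eq_div, div_le_iff₀ hL'0] at hco
      linarith [hco]
    nlinarith [hco']

end Aux

/-- Per-iteration contraction estimate from the proof of Theorem 1 of the paper:
if the server model update `gbar` satisfies `‖gbar − ∇F(θ)‖ ≤ 8Λ‖θ − θ*‖ + 4Γ` and the
accepted (possibly adversarial) client update `g` satisfies the AFLGuard acceptance
criterion `‖g − gbar‖ ≤ λ‖gbar‖`, then the next iterate `θ⁺ = θ − ηg` satisfies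
`‖θ⁺ − θ*‖ ≤ (√(1 − 2ημL/(μ+L)) + ηLλ + 8ηΛ(λ+1))‖θ − θ*‖ + 4ηΓ(λ+1)`. -/
theorem aflguard_one_step_contraction
    (d : ℕ) (F : EuclideanSpace ℝ (Fin d) → ℝ)
    (gradF : EuclideanSpace ℝ (Fin d) → EuclideanSpace ℝ (Fin d))
    (hdiff : ∀ θ, HasGradientAt F (gradF θ) θ)
    (μ L : ℝ) (hμ : 0 < μ) (hμL : μ ≤ L)
    (hstrong : ∀ θ θ' : EuclideanSpace ℝ (Fin d),
      F θ + ⟪gradF θ, θ' - θ⟫ + μ / 2 * ‖θ' - θ‖ ^ 2 ≤ F θ')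
    (hlip : ∀ θ θ' : EuclideanSpace ℝ (Fin d),
      ‖gradF θ - gradF θ'‖ ≤ L * ‖θ - θ'‖)
    (θstar : EuclideanSpace ℝ (Fin d)) (hθstar : gradF θstar = 0)
    (lam Lambda Gamma : ℝ) (hlam : 0 < lam) (hLambda : 0 ≤ Lambda) (hGamma : 0 ≤ Gamma)
    (η : ℝ) (hη0 : 0 < η) (hη : η ≤ 2 / (μ + L))
    (θ gbar g : EuclideanSpace ℝ (Fin d))
    (hgbar : ‖gbar - gradF θ‖ ≤ 8 * Lambda * ‖θ - θstar‖ + 4 * Gamma)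
    (haccept : ‖g - gbar‖ ≤ lam * ‖gbar‖) :
    ‖θ - η • g - θstar‖ ≤
      (Real.sqrt (1 - 2 * η * μ * L / (μ + L)) + η * L * lam + 8 * η * Lambda * (lam + 1))
        * ‖θ - θstar‖ + 4 * η * Gamma * (lam + 1) := by
  have hL0 : 0 < L := lt_of_lt_of_le hμ hμL
  have hμL0 : 0 < μ + L := by linarith
  have hηa : η * (μ + L) ≤ 2 := by
    rw [← le_div_iff₀ hμL0]; exact hη
  -- coercivity at (θ, θstar)
  have hc := aflg_coercive F gradF hdiff μ L hμ hμL hstrong hlip θ θstar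
  rw [hθstar, sub_zero] at hc
  have hc' : μ * L * ‖θ - θstar‖ ^ 2 + ‖gradF θ‖ ^ 2 ≤ (μ + L) * ⟪gradF θ, θ - θstar⟫ := by
    rw [div_mul_eq_mul_div, div_mul_eq_mul_div, ← add_div, div_le_iff₀ hμL0] at hc
    linarith
  -- the gradient-step contraction
  have hA : ‖(θ - θstar) - η • gradF θ‖ ^ 2
      = ‖θ - θstar‖ ^ 2 - 2 * η * ⟪gradF θ, θ - θstar⟫ + η ^ 2 * ‖gradF θ‖ ^ 2 := by
    rw [aflg_norm_sub_smul_sq, real_inner_comm]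
  have hsqnn : 0 ≤ 1 - 2 * η * μ * L / (μ + L) := by
    rw [sub_nonneg, div_le_one hμL0]
    nlinarith [mul_le_mul_of_nonneg_right hηa (mul_nonneg hμ.le hL0.le), sq_nonneg (μ - L)]
  have hkey : ‖(θ - θstar) - η • gradF θ‖ ^ 2
      ≤ (1 - 2 * η * μ * L / (μ + L)) * ‖θ - θstar‖ ^ 2 := by
    rw [hA]
    have hrhs : (μ + L) * ((1 - 2 * η * μ * L / (μ + L)) * ‖θ - θstar‖ ^ 2)
        = ((μ + L) - 2 * η * μ * L) * ‖θ - θstar‖ ^ 2 := by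
      field_simp
    rw [← mul_le_mul_iff_right₀ hμL0, hrhs]
    have p1 := mul_le_mul_of_nonneg_left hc' (mul_nonneg zero_le_two hη0.le)
    have p2 := mul_le_mul_of_nonneg_right hηa (mul_nonneg hη0.le (sq_nonneg ‖gradF θ‖))
    nlinarith [p1, p2]
  have hstep1 : ‖(θ - θstar) - η • gradF θ‖
      ≤ Real.sqrt (1 - 2 * η * μ * L / (μ + L)) * ‖θ - θstar‖ := by
    have h := Real.sqrt_le_sqrt hkey
    rwa [Real.sqrt_sq (norm_nonneg _), Real.sqrt_mul hsqnn,
      Real.sqrt_sq (norm_nonneg _)] at h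
  -- norm bounds
  have hG : ‖gradF θ‖ ≤ L * ‖θ - θstar‖ := by
    have h := hlip θ θstar
    rwa [hθstar, sub_zero] at h
  have hgb : ‖gbar‖ ≤ L * ‖θ - θstar‖ + (8 * Lambda * ‖θ - θstar‖ + 4 * Gamma) := by
    calc ‖gbar‖ = ‖(gbar - gradF θ) + gradF θ‖ := by rw [sub_add_cancel]
      _ ≤ ‖gbar - gradF θ‖ + ‖gradF θ‖ := norm_add_le _ _
      _ ≤ L * ‖θ - θstar‖ + (8 * Lambda * ‖θ - θstar‖ + 4 * Gamma) := by linarith [hgbar, hG]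
  have h5 : ‖g - gradF θ‖
      ≤ lam * (L * ‖θ - θstar‖ + (8 * Lambda * ‖θ - θstar‖ + 4 * Gamma))
        + (8 * Lambda * ‖θ - θstar‖ + 4 * Gamma) := by
    calc ‖g - gradF θ‖ = ‖(g - gbar) + (gbar - gradF θ)‖ := by rw [sub_add_sub_cancel]
      _ ≤ ‖g - gbar‖ + ‖gbar - gradF θ‖ := norm_add_le _ _
      _ ≤ lam * ‖gbar‖ + (8 * Lambda * ‖θ - θstar‖ + 4 * Gamma) := by linarith [haccept, hgbar]
      _ ≤ _ := by
          have := mul_le_mul_of_nonneg_left hgb hlam.le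
          linarith
  have hdecomp : θ - η • g - θstar = ((θ - θstar) - η • gradF θ) - η • (g - gradF θ) := by
    module
  have htri : ‖θ - η • g - θstar‖
      ≤ ‖(θ - θstar) - η • gradF θ‖ + η * ‖g - gradF θ‖ := by
    rw [hdecomp]
    calc ‖((θ - θstar) - η • gradF θ) - η • (g - gradF θ)‖
        ≤ ‖(θ - θstar) - η • gradF θ‖ + ‖η • (g - gradF θ)‖ := norm_sub_le _ _
      _ = ‖(θ - θstar) - η • gradF θ‖ + η * ‖g - gradF θ‖ := by
          rw [norm_smul, Real.norm_eq_abs, abs_of_pos hη0]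
  have h6 := mul_le_mul_of_nonneg_left h5 hη0.le
  calc ‖θ - η • g - θstar‖ ≤ ‖(θ - θstar) - η • gradF θ‖ + η * ‖g - gradF θ‖ := htri
    _ ≤ Real.sqrt (1 - 2 * η * μ * L / (μ + L)) * ‖θ - θstar‖
        + η * (lam * (L * ‖θ - θstar‖ + (8 * Lambda * ‖θ - θstar‖ + 4 * Gamma))
          + (8 * Lambda * ‖θ - θstar‖ + 4 * Gamma)) := add_le_add hstep1 h6
    _ = (Real.sqrt (1 - 2 * η * μ * L / (μ + L)) + η * L * lam + 8 * η * Lambda * (lam + 1))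
        * ‖θ - θstar‖ + 4 * η * Gamma * (lam + 1) := by ring
end

section
/- (Theorem 1, deterministic form on the concentration event.) Let F : ℝ^d → ℝ be differentiable with gradient ∇F, μ-strongly convex with L-Lipschitz gradient (0 < μ ≤ L), and let θ* satisfy ∇F(θ*) = 0. Let Θ ⊆ ℝ^d, λ > 0, Λ ≥ 0, Γ ≥ 0, and let ḡ : ℝ^d → ℝ^d (the trusted-dataset empirical gradient) satisfy ‖ḡ(θ) − ∇F(θ)‖ ≤ 8Λ‖θ − θ*‖ + 4Γ for every θ ∈ Θ. Let 0 < η ≤ 2/(μ + L) and set q = 1 − (√(1 − 2ημL/(μ + L)) + ηLλ + 8ηΛ(λ + 1)); assume q > 0. Let (θ^t)_{t≥0} be a sequence in Θ with θ^{t+1} = θ^t − η g^t for some g^t ∈ ℝ^d satisfying the acceptance criterion ‖g^t − ḡ(θ^t)‖ ≤ λ‖ḡ(θ^t)‖ for every t. Then for every t ≥ 0: ‖θ^t − θ*‖ ≤ (1 − q)^t ‖θ^0 − θ*‖ + 4ηΓ(λ + 1)/q. -/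
open RealInnerProductSpace

section Aux

variable {E : Type*} [NormedAddCommGroup E] [InnerProductSpace ℝ E] [CompleteSpace E]

/-- Derivative of a function along a line, from its gradient. -/
lemma aflguard_hasDerivAt_line (G : E → ℝ) (gradG : E → E)
    (hdiff : ∀ p, HasGradientAt G (gradG p) p) (x v : E) (t : ℝ) :
    HasDerivAt (fun s : ℝ => G (x + s • v)) ⟪gradG (x + t • v), v⟫ t := by
  have hline : HasDerivAt (fun s : ℝ => x + s • v) v t := by
    simpa using ((hasDerivAt_id t).smul_const v).const_add x
  have hF := hasGradientAt_iff_hasFDerivAt.mp (hdiff (x + t • v))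
  have := hF.comp_hasDerivAt t hline
  simpa [InnerProductSpace.toDual_apply_apply, Function.comp_def] using this

/-- Descent lemma: a function with `K`-Lipschitz gradient satisfies the quadratic
upper bound. -/
lemma aflguard_descent (G : E → ℝ) (gradG : E → E)
    (hdiff : ∀ p, HasGradientAt G (gradG p) p)
    (K : ℝ) (hlip : ∀ p p', ‖gradG p - gradG p'‖ ≤ K * ‖p - p'‖) (x y : E) :
    G y ≤ G x + ⟪gradG x, y - x⟫ + K / 2 * ‖y - x‖ ^ 2 := by
  set v := y - x with hv
  set φ : ℝ → ℝ := fun t => G (x + t • v) - t * ⟪gradG x, v⟫ - K * t ^ 2 / 2 * ‖v‖ ^ 2 with hφ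
  have hderiv : ∀ t : ℝ, HasDerivAt φ
      (⟪gradG (x + t • v), v⟫ - ⟪gradG x, v⟫ - K * t * ‖v‖ ^ 2) t := by
    intro t
    have h1 := aflguard_hasDerivAt_line G gradG hdiff x v t
    have h2 : HasDerivAt (fun s : ℝ => s * ⟪gradG x, v⟫) ⟪gradG x, v⟫ t := by
      simpa using (hasDerivAt_id t).mul_const ⟪gradG x, v⟫
    have h3 : HasDerivAt (fun s : ℝ => K * s ^ 2 / 2 * ‖v‖ ^ 2) (K * t * ‖v‖ ^ 2) t := by
      have h4 := (((hasDerivAt_pow 2 t).const_mul K).div_const 2).mul_const (‖v‖ ^ 2)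
      convert h4 using 1
      · rfl
      · rfl
      ring
    exact (h1.sub h2).sub h3
  have hmono : AntitoneOn φ (Set.Icc (0 : ℝ) 1) := by
    apply antitoneOn_of_deriv_nonpos (convex_Icc 0 1)
    · exact fun t _ => (hderiv t).continuousAt.continuousWithinAt
    · exact fun t _ => (hderiv t).differentiableAt.differentiableWithinAt
    · intro t ht
      rw [interior_Icc] at ht
      rw [(hderiv t).deriv]
      have hx : ⟪gradG (x + t • v) - gradG x, v⟫ ≤ K * t * ‖v‖ ^ 2 := by
        calc ⟪gradG (x + t • v) - gradG x, v⟫ ≤ ‖gradG (x + t • v) - gradG x‖ * ‖v‖ :=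
              real_inner_le_norm _ _
          _ ≤ (K * ‖(x + t • v) - x‖) * ‖v‖ :=
              mul_le_mul_of_nonneg_right (hlip _ _) (norm_nonneg v)
          _ = K * t * ‖v‖ ^ 2 := by
              rw [add_sub_cancel_left, norm_smul, Real.norm_eq_abs, abs_of_pos ht.1]
              ring
      rw [inner_sub_left] at hx
      linarith
  have h01 := hmono (Set.left_mem_Icc.mpr zero_le_one) (Set.right_mem_Icc.mpr zero_le_one)
    zero_le_one
  have e0 : φ 0 = G x := by simp [hφ]
  have e1 : φ 1 = G y - ⟪gradG x, v⟫ - K / 2 * ‖v‖ ^ 2 := by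
    have hxy : x + (1 : ℝ) • v = y := by rw [one_smul, hv]; abel
    simp only [hφ, hxy, one_pow, mul_one, one_mul]
  rw [e0, e1] at h01
  linarith

/-- One-sided co-coercivity bound. -/
lemma aflguard_cocoercive_aux (G : E → ℝ) (gradG : E → E) (K : ℝ) (hK : 0 < K)
    (hconv : ∀ a b, G a + ⟪gradG a, b - a⟫ ≤ G b)
    (hdesc : ∀ a b, G b ≤ G a + ⟪gradG a, b - a⟫ + K / 2 * ‖b - a‖ ^ 2) (x y : E) :
    G x + ⟪gradG x, y - x⟫ + 1 / (2 * K) * ‖gradG y - gradG x‖ ^ 2 ≤ G y := by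
  set Δ := gradG y - gradG x with hΔ
  set z := y - K⁻¹ • Δ with hz
  have h1 := hconv x z
  have h2 := hdesc y z
  have ezy : z - y = -(K⁻¹ • Δ) := by rw [hz]; abel
  have e1 : ⟪gradG x, z - x⟫ = ⟪gradG x, y - x⟫ - K⁻¹ * ⟪gradG x, Δ⟫ := by
    have hzx : z - x = (y - x) - K⁻¹ • Δ := by rw [hz]; abel
    rw [hzx, inner_sub_right, real_inner_smul_right]
  have e2 : ⟪gradG y, z - y⟫ = -(K⁻¹ * ⟪gradG y, Δ⟫) := by
    rw [ezy, inner_neg_right, real_inner_smul_right]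
  have e3 : ‖z - y‖ ^ 2 = K⁻¹ ^ 2 * ‖Δ‖ ^ 2 := by
    rw [ezy, norm_neg, norm_smul, Real.norm_eq_abs, abs_of_pos (inv_pos.mpr hK)]
    ring
  have e4 : ⟪gradG y, Δ⟫ - ⟪gradG x, Δ⟫ = ‖Δ‖ ^ 2 := by
    rw [← inner_sub_left, ← hΔ, real_inner_self_eq_norm_sq]
  rw [e1] at h1
  rw [e2, e3] at h2
  have hK' : K ≠ 0 := ne_of_gt hK
  have key : K / 2 * (K⁻¹ ^ 2 * ‖Δ‖ ^ 2) = 1 / (2 * K) * ‖Δ‖ ^ 2 := by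
    field_simp
  rw [key] at h2
  have e5 : K⁻¹ * ⟪gradG y, Δ⟫ - K⁻¹ * ⟪gradG x, Δ⟫ = 2 * (1 / (2 * K) * ‖Δ‖ ^ 2) := by
    rw [← mul_sub, e4]
    field_simp
  linarith

/-- Co-coercivity of a convex function with a quadratic upper bound. -/
lemma aflguard_cocoercive (G : E → ℝ) (gradG : E → E) (K : ℝ) (hK : 0 < K)
    (hconv : ∀ a b, G a + ⟪gradG a, b - a⟫ ≤ G b)
    (hdesc : ∀ a b, G b ≤ G a + ⟪gradG a, b - a⟫ + K / 2 * ‖b - a‖ ^ 2) (x y : E) :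
    ‖gradG x - gradG y‖ ^ 2 ≤ K * ⟪gradG x - gradG y, x - y⟫ := by
  have hxy := aflguard_cocoercive_aux G gradG K hK hconv hdesc x y
  have hyx := aflguard_cocoercive_aux G gradG K hK hconv hdesc y x
  have hnorm : ‖gradG y - gradG x‖ = ‖gradG x - gradG y‖ := norm_sub_rev _ _
  rw [hnorm] at hxy
  have einner : ⟪gradG x, y - x⟫ + ⟪gradG y, x - y⟫ = -⟪gradG x - gradG y, x - y⟫ := by
    rw [inner_sub_left]
    have hyx' : (y - x : E) = -(x - y) := by abel
    rw [hyx', inner_neg_right]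
    ring
  set N := ‖gradG x - gradG y‖ ^ 2 with hN
  set s := ⟪gradG x - gradG y, x - y⟫ with hs
  have h6 : N / K ≤ s := by
    have hsum : 1 / (2 * K) * N + 1 / (2 * K) * N = N / K := by
      field_simp
      ring
    linarith
  rw [mul_comm]
  exact (div_le_iff₀ hK).mp h6

/-- Combined coercivity for a strongly convex function with Lipschitz gradient. -/
lemma aflguard_coercive (F : E → ℝ) (gradF : E → E)
    (hdiff : ∀ p, HasGradientAt F (gradF p) p)
    (μ L : ℝ) (hμ : 0 < μ) (hμL : μ ≤ L)
    (hstrong : ∀ a b : E, F a + ⟪gradF a, b - a⟫ + μ / 2 * ‖b - a‖ ^ 2 ≤ F b)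
    (hlip : ∀ a b : E, ‖gradF a - gradF b‖ ≤ L * ‖a - b‖) (x y : E) :
    μ * L * ‖x - y‖ ^ 2 + ‖gradF x - gradF y‖ ^ 2 ≤ (μ + L) * ⟪gradF x - gradF y, x - y⟫ := by
  have hstrong' : ∀ a b : E, μ * ‖a - b‖ ^ 2 ≤ ⟪gradF a - gradF b, a - b⟫ := by
    intro a b
    have h1 := hstrong a b
    have h2 := hstrong b a
    have hab : ‖b - a‖ = ‖a - b‖ := norm_sub_rev _ _
    rw [hab] at h1
    have eba : (b - a : E) = -(a - b) := by abel
    have e1 : ⟪gradF a, b - a⟫ = -⟪gradF a, a - b⟫ := by rw [eba, inner_neg_right]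
    rw [e1] at h1
    rw [inner_sub_left]
    linarith
  rcases eq_or_lt_of_le hμL with heq | hlt
  · -- case μ = L
    subst heq
    have hs := hstrong' x y
    have hl := hlip x y
    have hsq : ‖gradF x - gradF y‖ ^ 2 ≤ μ ^ 2 * ‖x - y‖ ^ 2 := by
      have := mul_self_le_mul_self (norm_nonneg _) hl
      nlinarith [norm_nonneg (x - y), norm_nonneg (gradF x - gradF y)]
    nlinarith [hs, hsq]
  · -- case μ < L
    have hL : 0 < L := hμ.trans hlt
    set Gf : E → ℝ := fun θ => F θ - μ / 2 * ‖θ‖ ^ 2 with hGf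
    set gradG : E → E := fun θ => gradF θ - μ • θ with hgradG
    have ealg : ∀ a b : E, ⟪gradG a, b - a⟫ =
        ⟪gradF a, b - a⟫ - μ * (⟪a, b⟫ - ‖a‖ ^ 2) := by
      intro a b
      simp only [hgradG]
      simp only [inner_sub_left, inner_sub_right, real_inner_smul_left,
        real_inner_self_eq_norm_sq]
      ring
    have enorm : ∀ a b : E, ‖b - a‖ ^ 2 = ‖b‖ ^ 2 - 2 * ⟪a, b⟫ + ‖a‖ ^ 2 := by
      intro a b
      rw [norm_sub_sq_real, real_inner_comm]
    have hconv : ∀ a b, Gf a + ⟪gradG a, b - a⟫ ≤ Gf b := by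
      intro a b
      have h := hstrong a b
      rw [enorm a b] at h
      simp only [hGf]
      rw [ealg a b]
      nlinarith [h]
    have hdesc : ∀ a b, Gf b ≤ Gf a + ⟪gradG a, b - a⟫ + (L - μ) / 2 * ‖b - a‖ ^ 2 := by
      intro a b
      have h := aflguard_descent F gradF hdiff L hlip a b
      rw [enorm a b] at h
      simp only [hGf]
      rw [ealg a b, enorm a b]
      nlinarith [h]
    have hco := aflguard_cocoercive Gf gradG (L - μ) (sub_pos.mpr hlt) hconv hdesc x y
    have eΔ : gradG x - gradG y = (gradF x - gradF y) - μ • (x - y) := by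
      simp only [hgradG, smul_sub]
      abel
    rw [eΔ] at hco
    have e6 : ‖(gradF x - gradF y) - μ • (x - y)‖ ^ 2 =
        ‖gradF x - gradF y‖ ^ 2 - 2 * μ * ⟪gradF x - gradF y, x - y⟫
          + μ ^ 2 * ‖x - y‖ ^ 2 := by
      rw [norm_sub_sq_real, real_inner_smul_right, norm_smul, Real.norm_eq_abs,
        abs_of_pos hμ]
      ring
    have e7 : ⟪(gradF x - gradF y) - μ • (x - y), x - y⟫ =
        ⟪gradF x - gradF y, x - y⟫ - μ * ‖x - y‖ ^ 2 := by
      rw [inner_sub_left, real_inner_smul_left, real_inner_self_eq_norm_sq]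
    rw [e6, e7] at hco
    nlinarith [hco]

/-- Contraction of the exact gradient step. -/
lemma aflguard_contraction (F : E → ℝ) (gradF : E → E)
    (hdiff : ∀ p, HasGradientAt F (gradF p) p)
    (μ L : ℝ) (hμ : 0 < μ) (hμL : μ ≤ L)
    (hstrong : ∀ a b : E, F a + ⟪gradF a, b - a⟫ + μ / 2 * ‖b - a‖ ^ 2 ≤ F b)
    (hlip : ∀ a b : E, ‖gradF a - gradF b‖ ≤ L * ‖a - b‖)
    (θstar : E) (hθstar : gradF θstar = 0)
    (η : ℝ) (hη0 : 0 < η) (hη : η ≤ 2 / (μ + L)) (x : E) :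
    ‖x - η • gradF x - θstar‖ ≤
      Real.sqrt (1 - 2 * η * μ * L / (μ + L)) * ‖x - θstar‖ := by
  have hL : 0 < L := hμ.trans_le hμL
  have hP : 0 < μ + L := by linarith
  have hη' : η * (μ + L) ≤ 2 := (le_div_iff₀ hP).mp hη
  have hD := aflguard_coercive F gradF hdiff μ L hμ hμL hstrong hlip x θstar
  rw [hθstar, sub_zero] at hD
  set r := ‖x - θstar‖ with hr
  set gv := ‖gradF x‖ with hgv
  have ht0 : 0 ≤ 1 - 2 * η * μ * L / (μ + L) := by
    rw [sub_nonneg, div_le_one hP]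
    nlinarith [mul_nonneg hP.le (sub_nonneg.mpr hη'), mul_nonneg hη0.le (sq_nonneg (μ - L))]
  have hsq : ‖x - η • gradF x - θstar‖ ^ 2 ≤ (1 - 2 * η * μ * L / (μ + L)) * r ^ 2 := by
    have hexp : ‖x - η • gradF x - θstar‖ ^ 2 =
        r ^ 2 - 2 * η * ⟪gradF x, x - θstar⟫ + η ^ 2 * gv ^ 2 := by
      have hre : x - η • gradF x - θstar = (x - θstar) - η • gradF x := by abel
      rw [hre, norm_sub_sq_real, real_inner_smul_right, norm_smul, Real.norm_eq_abs,
        abs_of_pos hη0, real_inner_comm]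
      ring
    rw [hexp, ← mul_le_mul_iff_of_pos_right hP]
    have e8 : (1 - 2 * η * μ * L / (μ + L)) * r ^ 2 * (μ + L) =
        ((μ + L) - 2 * η * μ * L) * r ^ 2 := by
      field_simp
    rw [e8]
    nlinarith [mul_nonneg (by positivity : (0:ℝ) ≤ 2 * η) (sub_nonneg.mpr hD),
      mul_nonneg (mul_nonneg hη0.le (sq_nonneg gv)) (sub_nonneg.mpr hη')]
  calc ‖x - η • gradF x - θstar‖ = Real.sqrt (‖x - η • gradF x - θstar‖ ^ 2) :=
        (Real.sqrt_sq (norm_nonneg _)).symm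
    _ ≤ Real.sqrt ((1 - 2 * η * μ * L / (μ + L)) * r ^ 2) := Real.sqrt_le_sqrt hsq
    _ = Real.sqrt (1 - 2 * η * μ * L / (μ + L)) * r := by
        rw [Real.sqrt_mul ht0, Real.sqrt_sq (norm_nonneg _)]

end Aux

/-- Theorem 1 of the paper (deterministic form, on the concentration event):
if the trusted-dataset empirical gradient `gbar` satisfies
`‖gbar(θ) − ∇F(θ)‖ ≤ 8Λ‖θ − θ*‖ + 4Γ` on `Θ`, each accepted update `g t` satisfies the
AFLGuard acceptance criterion, and
`q = 1 − (√(1 − 2ημL/(μ+L)) + ηLλ + 8ηΛ(λ+1)) > 0`, then AFLGuard's iterates satisfy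
`‖θ^t − θ*‖ ≤ (1 − q)^t ‖θ^0 − θ*‖ + 4ηΓ(λ+1)/q`. -/
theorem aflguard_convergence
    (d : ℕ) (F : EuclideanSpace ℝ (Fin d) → ℝ)
    (gradF : EuclideanSpace ℝ (Fin d) → EuclideanSpace ℝ (Fin d))
    (hdiff : ∀ θ, HasGradientAt F (gradF θ) θ)
    (μ L : ℝ) (hμ : 0 < μ) (hμL : μ ≤ L)
    (hstrong : ∀ θ θ' : EuclideanSpace ℝ (Fin d),
      F θ + ⟪gradF θ, θ' - θ⟫ + μ / 2 * ‖θ' - θ‖ ^ 2 ≤ F θ')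
    (hlip : ∀ θ θ' : EuclideanSpace ℝ (Fin d),
      ‖gradF θ - gradF θ'‖ ≤ L * ‖θ - θ'‖)
    (θstar : EuclideanSpace ℝ (Fin d)) (hθstar : gradF θstar = 0)
    (Θ : Set (EuclideanSpace ℝ (Fin d)))
    (lam Lambda Gamma : ℝ) (hlam : 0 < lam) (hLambda : 0 ≤ Lambda) (hGamma : 0 ≤ Gamma)
    (gbar : EuclideanSpace ℝ (Fin d) → EuclideanSpace ℝ (Fin d))
    (hgbar : ∀ θ ∈ Θ, ‖gbar θ - gradF θ‖ ≤ 8 * Lambda * ‖θ - θstar‖ + 4 * Gamma)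
    (η : ℝ) (hη0 : 0 < η) (hη : η ≤ 2 / (μ + L))
    (q : ℝ)
    (hq : q = 1 - (Real.sqrt (1 - 2 * η * μ * L / (μ + L)) + η * L * lam
      + 8 * η * Lambda * (lam + 1)))
    (hqpos : 0 < q)
    (θseq : ℕ → EuclideanSpace ℝ (Fin d)) (hmem : ∀ t, θseq t ∈ Θ)
    (g : ℕ → EuclideanSpace ℝ (Fin d))
    (hupdate : ∀ t, θseq (t + 1) = θseq t - η • g t)
    (haccept : ∀ t, ‖g t - gbar (θseq t)‖ ≤ lam * ‖gbar (θseq t)‖) :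
    ∀ t : ℕ, ‖θseq t - θstar‖ ≤
      (1 - q) ^ t * ‖θseq 0 - θstar‖ + 4 * η * Gamma * (lam + 1) / q := by
  have hL : 0 < L := hμ.trans_le hμL
  set ρ := Real.sqrt (1 - 2 * η * μ * L / (μ + L)) with hρ
  have hρ0 : 0 ≤ ρ := Real.sqrt_nonneg _
  have hstep : ∀ t, ‖θseq (t + 1) - θstar‖ ≤
      (1 - q) * ‖θseq t - θstar‖ + 4 * η * Gamma * (lam + 1) := by
    intro t
    set x := θseq t with hx
    set r := ‖x - θstar‖ with hrdef
    have hr0 : 0 ≤ r := norm_nonneg _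
    have hb1 : ‖gradF x‖ ≤ L * r := by simpa [hθstar] using hlip x θstar
    have hb2 : ‖gbar x - gradF x‖ ≤ 8 * Lambda * r + 4 * Gamma := hgbar x (hmem t)
    have hb3 : ‖gbar x‖ ≤ L * r + (8 * Lambda * r + 4 * Gamma) := by
      calc ‖gbar x‖ = ‖gradF x + (gbar x - gradF x)‖ := by congr 1; abel
        _ ≤ ‖gradF x‖ + ‖gbar x - gradF x‖ := norm_add_le _ _
        _ ≤ _ := add_le_add hb1 hb2
    have hb4 : ‖g t - gradF x‖ ≤
        lam * (L * r + (8 * Lambda * r + 4 * Gamma)) + (8 * Lambda * r + 4 * Gamma) := by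
      calc ‖g t - gradF x‖ ≤ ‖g t - gbar x‖ + ‖gbar x - gradF x‖ := by
            simpa using norm_add_le (g t - gbar x) (gbar x - gradF x)
        _ ≤ lam * ‖gbar x‖ + (8 * Lambda * r + 4 * Gamma) := add_le_add (haccept t) hb2
        _ ≤ _ := add_le_add (mul_le_mul_of_nonneg_left hb3 hlam.le) le_rfl
    have hdecomp : θseq (t + 1) - θstar =
        (x - η • gradF x - θstar) - η • (g t - gradF x) := by
      rw [hupdate t, ← hx]
      module
    have hcontr : ‖x - η • gradF x - θstar‖ ≤ ρ * r :=
      aflguard_contraction F gradF hdiff μ L hμ hμL hstrong hlip θstar hθstar η hη0 hη x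
    calc ‖θseq (t + 1) - θstar‖
        = ‖(x - η • gradF x - θstar) - η • (g t - gradF x)‖ := by rw [hdecomp]
      _ ≤ ‖x - η • gradF x - θstar‖ + ‖η • (g t - gradF x)‖ := norm_sub_le _ _
      _ = ‖x - η • gradF x - θstar‖ + η * ‖g t - gradF x‖ := by
          rw [norm_smul, Real.norm_eq_abs, abs_of_pos hη0]
      _ ≤ ρ * r + η * (lam * (L * r + (8 * Lambda * r + 4 * Gamma))
            + (8 * Lambda * r + 4 * Gamma)) :=
          add_le_add hcontr (mul_le_mul_of_nonneg_left hb4 hη0.le)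
      _ = (ρ + η * L * lam + 8 * η * Lambda * (lam + 1)) * r
            + 4 * η * Gamma * (lam + 1) := by ring
      _ = (1 - q) * r + 4 * η * Gamma * (lam + 1) := by rw [hq]; ring
  have h1q : 0 ≤ 1 - q := by
    rw [hq]
    have h1 : 0 ≤ η * L * lam := by positivity
    have h2 : 0 ≤ 8 * η * Lambda * (lam + 1) := by positivity
    linarith
  have hC : 0 ≤ 4 * η * Gamma * (lam + 1) := by positivity
  have hCq : 0 ≤ 4 * η * Gamma * (lam + 1) / q := div_nonneg hC hqpos.le
  intro t
  induction t with
  | zero =>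
    simp only [pow_zero, one_mul]
    exact le_add_of_nonneg_right hCq
  | succ t ih =>
    have h2 := hstep t
    have h3 : (1 - q) * ‖θseq t - θstar‖ ≤
        (1 - q) * ((1 - q) ^ t * ‖θseq 0 - θstar‖ + 4 * η * Gamma * (lam + 1) / q) :=
      mul_le_mul_of_nonneg_left ih h1q
    have h4 : (1 - q) * ((1 - q) ^ t * ‖θseq 0 - θstar‖ + 4 * η * Gamma * (lam + 1) / q)
        + 4 * η * Gamma * (lam + 1)
        = (1 - q) ^ (t + 1) * ‖θseq 0 - θstar‖ + 4 * η * Gamma * (lam + 1) / q := by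
      field_simp
      ring
    linarith
end

section
/- (Lemma 1, part (iii): the linear regression model satisfies Assumption 3 with α₂ = √8, ρ₂ = 8.) Let u be a standard Gaussian random vector on ℝ^d, let v ∈ ℝ^d be a unit vector, and let w ∈ ℝ^d with w ≠ 0. Then for every φ ∈ ℝ with φ² ≤ 1/(64‖w‖²): E[exp(φ · (⟨u, w⟩⟨u, v⟩ − ⟨w, v⟩))] ≤ exp(4φ²‖w‖²). -/
open MeasureTheory ProbabilityTheory RealInnerProductSpace


open MeasureTheory ProbabilityTheory Real Filter
open scoped NNReal ENNReal

noncomputable section GQMAux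

namespace GQM


/-! ### Scalar inequalities -/

lemma quad_le_exp {y : ℝ} (hy : 0 ≤ y) : 1 + y + y ^ 2 / 2 ≤ Real.exp y := by
  have h := Real.sum_le_exp_of_nonneg hy 3
  simp [Finset.sum_range_succ] at h
  calc 1 + y + y ^ 2 / 2 = 1 + y + y ^ 2 / 2 := rfl
    _ ≤ Real.exp y := by convert h using 2 <;> ring_nf
    
lemma sq_div_two_le_exp {y : ℝ} (hy : 0 ≤ y) : y ^ 2 / 2 ≤ Real.exp y := by
  nlinarith [quad_le_exp hy]

lemma exp_neg_le_quad {y : ℝ} (hy : 0 ≤ y) : Real.exp (-y) ≤ 1 - y + y ^ 2 / 2 := by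
  set g : ℝ → ℝ := fun y => (1 - y + y ^ 2 / 2) * Real.exp y with hg
  have hd : ∀ x : ℝ, HasDerivAt g (x ^ 2 / 2 * Real.exp x) x := by
    intro x
    have h1 : HasDerivAt (fun y : ℝ => 1 - y + y ^ 2 / 2) (-1 + x) x := by
      have : HasDerivAt (fun y : ℝ => y ^ 2) (2 * x) x := by
        simpa using hasDerivAt_pow 2 x
      have := ((hasDerivAt_const x (1:ℝ)).sub (hasDerivAt_id x)).add (this.div_const 2)
      exact this.congr_deriv (by ring)
    have := h1.mul (Real.hasDerivAt_exp x)
    refine this.congr_deriv ?_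
    ring
  have hmono : Monotone g := by
    refine monotone_of_deriv_nonneg (fun x => (hd x).differentiableAt) ?_
    intro x
    rw [(hd x).deriv]
    positivity
  have h0 : g 0 = 1 := by simp [hg]
  have := hmono hy
  rw [h0] at this
  have hexp : 0 < Real.exp y := Real.exp_pos y
  rw [hg] at this
  simp only at this
  -- this : 1 ≤ (1 - y + y^2/2) * exp y
  rw [Real.exp_neg]
  rw [inv_le_iff_one_le_mul₀ hexp]
  linarith [this]

lemma key_scalar {x : ℝ} (hx : x ≤ 1 / 4) :
    Real.exp (-x) ≤ Real.sqrt (1 - 2 * x) * Real.exp (4 * x ^ 2) := by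
  have hy : (0:ℝ) < 1 + (2 * x + 8 * x ^ 2) := by nlinarith [sq_nonneg (4*x+1)]
  have h1 : Real.exp (-(2 * x + 8 * x ^ 2)) ≤ (1 + (2 * x + 8 * x ^ 2))⁻¹ := by
    rw [Real.exp_neg]
    apply inv_anti₀ hy
    linarith [Real.add_one_le_exp (2 * x + 8 * x ^ 2)]
  have h2 : (1 + (2 * x + 8 * x ^ 2))⁻¹ ≤ 1 - 2 * x := by
    rw [inv_le_iff_one_le_mul₀ hy]
    nlinarith [sq_nonneg x]
  have h3 : Real.exp (-(2 * x)) ≤ (1 - 2 * x) * Real.exp (8 * x ^ 2) := by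
    have := (h1.trans h2)
    have h4 : Real.exp (-(2*x)) = Real.exp (-(2 * x + 8 * x ^ 2)) * Real.exp (8 * x ^ 2) := by
      rw [← Real.exp_add]; ring_nf
    rw [h4]
    apply mul_le_mul_of_nonneg_right this (Real.exp_nonneg _)
  have h5 : Real.exp (-x) = Real.sqrt (Real.exp (-(2 * x))) := by
    rw [show -(2*x) = (-x) * 2 by ring, Real.exp_mul, Real.rpow_two, Real.sqrt_sq (Real.exp_nonneg _)]
  rw [h5]
  have h6 : Real.sqrt ((1 - 2 * x) * Real.exp (8 * x ^ 2))
      = Real.sqrt (1 - 2 * x) * Real.exp (4 * x ^ 2) := by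
    rw [Real.sqrt_mul (by linarith)]
    congr 1
    rw [show (8:ℝ) * x ^ 2 = (4 * x ^ 2) * 2 by ring, Real.exp_mul, Real.rpow_two,
      Real.sqrt_sq (Real.exp_nonneg _)]
  rw [← h6]
  exact Real.sqrt_le_sqrt h3



lemma pdf1_eq (x : ℝ) :
    gaussianPDFReal 0 1 x = (Real.sqrt (2 * π))⁻¹ * Real.exp (-x ^ 2 / 2) := by
  simp [gaussianPDFReal]

lemma integral_gaussianReal01 (g : ℝ → ℝ) :
    ∫ x, g x ∂(gaussianReal 0 1) = ∫ x, gaussianPDFReal 0 1 x * g x := by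
  rw [gaussianReal_of_var_ne_zero 0 one_ne_zero]
  have h : gaussianPDF 0 1 = fun x => ((Real.toNNReal (gaussianPDFReal 0 1 x) : ℝ≥0) : ℝ≥0∞) := by
    ext x; rw [gaussianPDF_def]; rfl
  rw [h, integral_withDensity_eq_integral_smul
    ((measurable_gaussianPDFReal 0 1).real_toNNReal) g]
  congr 1
  ext x
  rw [NNReal.smul_def, smul_eq_mul, Real.coe_toNNReal _ (gaussianPDFReal_nonneg 0 1 x)]

lemma integrable_gaussianReal01_iff (g : ℝ → ℝ) :
    Integrable g (gaussianReal 0 1) ↔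
      Integrable (fun x => gaussianPDFReal 0 1 x * g x) volume := by
  rw [gaussianReal_of_var_ne_zero 0 one_ne_zero]
  have h : gaussianPDF 0 1 = fun x => ((Real.toNNReal (gaussianPDFReal 0 1 x) : ℝ≥0) : ℝ≥0∞) := by
    ext x; rw [gaussianPDF_def]; rfl
  rw [h, integrable_withDensity_iff_integrable_smul
    ((measurable_gaussianPDFReal 0 1).real_toNNReal)]
  constructor <;> intro hI <;> refine hI.congr (Filter.Eventually.of_forall fun x => ?_) <;>
    simp [NNReal.smul_def, Real.coe_toNNReal _ (gaussianPDFReal_nonneg 0 1 x)]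

lemma gauss_exp_sq_integral {b : ℝ} (hb : b < 1 / 2) :
    ∫ x, Real.exp (b * x ^ 2) ∂(gaussianReal 0 1) = (Real.sqrt (1 - 2 * b))⁻¹ := by
  rw [integral_gaussianReal01]
  have hpt : ∀ x : ℝ, gaussianPDFReal 0 1 x * Real.exp (b * x ^ 2)
      = (Real.sqrt (2 * π))⁻¹ * Real.exp (-(1 / 2 - b) * x ^ 2) := by
    intro x
    rw [pdf1_eq, mul_assoc, ← Real.exp_add]
    congr 2
    ring
  simp_rw [hpt]
  rw [integral_const_mul, integral_gaussian]
  have h1 : (Real.sqrt (2*π))⁻¹ = Real.sqrt ((2*π)⁻¹) := (Real.sqrt_inv _).symm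
  have h2 : (Real.sqrt (1-2*b))⁻¹ = Real.sqrt ((1-2*b)⁻¹) := (Real.sqrt_inv _).symm
  rw [h1, h2, ← Real.sqrt_mul (by positivity)]
  congr 1
  have hπ : (0:ℝ) < π := Real.pi_pos
  have hb' : (0:ℝ) < 1/2 - b := by linarith
  have hb'' : (1:ℝ) - 2*b ≠ 0 := by linarith
  field_simp

lemma gauss_exp_sq_integrable {b : ℝ} (hb : b < 1 / 2) :
    Integrable (fun x => Real.exp (b * x ^ 2)) (gaussianReal 0 1) := by
  rw [integrable_gaussianReal01_iff]
  have hpt : ∀ x : ℝ, gaussianPDFReal 0 1 x * Real.exp (b * x ^ 2)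
      = (Real.sqrt (2 * π))⁻¹ * Real.exp (-(1 / 2 - b) * x ^ 2) := by
    intro x
    rw [pdf1_eq, mul_assoc, ← Real.exp_add]
    congr 2
    ring
  simp_rw [hpt]
  exact (integrable_exp_neg_mul_sq (by linarith)).const_mul _

lemma gauss_exp_lin_integral (c : ℝ) :
    ∫ x, Real.exp (c * x) ∂(gaussianReal 0 1) = Real.exp (c ^ 2 / 2) := by
  rw [integral_gaussianReal01]
  have hpt : ∀ x : ℝ, gaussianPDFReal 0 1 x * Real.exp (c * x)
      = Real.exp (c ^ 2 / 2) * gaussianPDFReal c 1 x := by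
    intro x
    rw [pdf1_eq]
    simp only [gaussianPDFReal, NNReal.coe_one, mul_one]
    rw [mul_assoc, ← Real.exp_add, mul_comm (Real.exp _), mul_assoc, ← Real.exp_add]
    congr 2
    ring
  simp_rw [hpt]
  rw [integral_const_mul, integral_gaussianPDFReal_eq_one c one_ne_zero, mul_one]

lemma gauss_exp_lin_integrable (c : ℝ) :
    Integrable (fun x => Real.exp (c * x)) (gaussianReal 0 1) := by
  rw [integrable_gaussianReal01_iff]
  have hpt : ∀ x : ℝ, gaussianPDFReal 0 1 x * Real.exp (c * x)
      = Real.exp (c ^ 2 / 2) * gaussianPDFReal c 1 x := by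
    intro x
    rw [pdf1_eq]
    simp only [gaussianPDFReal, NNReal.coe_one, mul_one]
    rw [mul_assoc, ← Real.exp_add, mul_comm (Real.exp _), mul_assoc, ← Real.exp_add]
    congr 2
    ring
  simp_rw [hpt]
  exact (integrable_gaussianPDFReal c 1).const_mul _

lemma integrable_id_mul_exp : Integrable (fun x : ℝ => x * Real.exp (-(1/2 : ℝ) * x ^ 2)) := by
  have := integrable_rpow_mul_exp_neg_mul_sq (b := (1/2 : ℝ)) (by norm_num) (s := 1) (by norm_num)
  refine this.congr (Filter.Eventually.of_forall fun x => ?_)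
  norm_num

lemma integrable_sq_mul_exp : Integrable (fun x : ℝ => x ^ 2 * Real.exp (-(1/2 : ℝ) * x ^ 2)) := by
  have := integrable_rpow_mul_exp_neg_mul_sq (b := (1/2 : ℝ)) (by norm_num) (s := 2) (by norm_num)
  refine this.congr (Filter.Eventually.of_forall fun x => ?_)
  have : x ^ (2:ℝ) = x ^ (2:ℕ) := by
    rw [show ((2:ℝ)) = ((2:ℕ):ℝ) by norm_num, Real.rpow_natCast]
  simp [this]

lemma gauss_id_integrable : Integrable (fun x : ℝ => x) (gaussianReal 0 1) := by
  rw [integrable_gaussianReal01_iff]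
  have hpt : ∀ x : ℝ, gaussianPDFReal 0 1 x * x
      = (Real.sqrt (2 * π))⁻¹ * (x * Real.exp (-(1/2 : ℝ) * x ^ 2)) := by
    intro x; rw [pdf1_eq]; ring_nf
  simp_rw [hpt]
  exact integrable_id_mul_exp.const_mul _

lemma gauss_sq_integrable : Integrable (fun x : ℝ => x ^ 2) (gaussianReal 0 1) := by
  rw [integrable_gaussianReal01_iff]
  have hpt : ∀ x : ℝ, gaussianPDFReal 0 1 x * x ^ 2
      = (Real.sqrt (2 * π))⁻¹ * (x ^ 2 * Real.exp (-(1/2 : ℝ) * x ^ 2)) := by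
    intro x; rw [pdf1_eq]; ring_nf
  simp_rw [hpt]
  exact integrable_sq_mul_exp.const_mul _

lemma gauss_id_integral : ∫ x, x ∂(gaussianReal 0 1) = 0 := by
  rw [integral_gaussianReal01]
  have hder : ∀ x : ℝ, HasDerivAt (fun y : ℝ => -(Real.sqrt (2 * π))⁻¹ * Real.exp (-(1/2:ℝ) * y ^ 2))
      (gaussianPDFReal 0 1 x * x) x := by
    intro x
    have h1 : HasDerivAt (fun y : ℝ => -(1/2:ℝ) * y ^ 2) (-x) x := by
      have := (hasDerivAt_pow 2 x).const_mul (-(1/2:ℝ))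
      refine this.congr_deriv ?_
      push_cast
      ring
    have h2 := (h1.exp).const_mul (-(Real.sqrt (2 * π))⁻¹)
    refine h2.congr_deriv ?_
    rw [pdf1_eq]
    ring_nf
  have hintf : Integrable (fun x : ℝ => gaussianPDFReal 0 1 x * x) := by
    have : (fun x : ℝ => gaussianPDFReal 0 1 x * x) =
        fun x : ℝ => (Real.sqrt (2 * π))⁻¹ * (x * Real.exp (-(1/2 : ℝ) * x ^ 2)) := by
      funext x; rw [pdf1_eq]; ring_nf
    rw [this]
    exact integrable_id_mul_exp.const_mul _
  have hintg : Integrable (fun y : ℝ => -(Real.sqrt (2 * π))⁻¹ * Real.exp (-(1/2:ℝ) * y ^ 2)) :=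
    (integrable_exp_neg_mul_sq (by norm_num)).const_mul _
  exact integral_eq_zero_of_hasDerivAt_of_integrable hder hintf hintg

lemma gauss_sq_integral : ∫ x, x ^ 2 ∂(gaussianReal 0 1) = 1 := by
  rw [integral_gaussianReal01]
  set c0 : ℝ := (Real.sqrt (2 * π))⁻¹ with hc0
  have hder : ∀ x : ℝ, HasDerivAt (fun y : ℝ => -c0 * (y * Real.exp (-(1/2:ℝ) * y ^ 2)))
      (gaussianPDFReal 0 1 x * x ^ 2 - c0 * Real.exp (-(1/2:ℝ) * x ^ 2)) x := by
    intro x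
    have h1 : HasDerivAt (fun y : ℝ => -(1/2:ℝ) * y ^ 2) (-x) x := by
      have := (hasDerivAt_pow 2 x).const_mul (-(1/2:ℝ))
      refine this.congr_deriv ?_
      push_cast
      ring
    have h2 := ((hasDerivAt_id x).mul h1.exp).const_mul (-c0)
    refine h2.congr_deriv ?_
    rw [pdf1_eq, ← hc0]
    simp only [id_eq]
    ring
  have hint2 : Integrable (fun x : ℝ => gaussianPDFReal 0 1 x * x ^ 2) := by
    have : (fun x : ℝ => gaussianPDFReal 0 1 x * x ^ 2) =
        fun x : ℝ => c0 * (x ^ 2 * Real.exp (-(1/2 : ℝ) * x ^ 2)) := by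
      funext x; rw [pdf1_eq, ← hc0]; ring_nf
    rw [this]
    exact integrable_sq_mul_exp.const_mul _
  have hintc : Integrable (fun x : ℝ => c0 * Real.exp (-(1/2:ℝ) * x ^ 2)) :=
    (integrable_exp_neg_mul_sq (by norm_num)).const_mul _
  have hintf : Integrable (fun y : ℝ => -c0 * (y * Real.exp (-(1/2:ℝ) * y ^ 2))) :=
    (integrable_id_mul_exp.const_mul _)
  have h0 := integral_eq_zero_of_hasDerivAt_of_integrable hder (hint2.sub hintc) hintf
  rw [integral_sub hint2 hintc] at h0
  have hval : ∫ x : ℝ, c0 * Real.exp (-(1/2:ℝ) * x ^ 2) = 1 := by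
    rw [integral_const_mul, integral_gaussian]
    rw [hc0]
    have h1 : (Real.sqrt (2*π))⁻¹ = Real.sqrt ((2*π)⁻¹) := (Real.sqrt_inv _).symm
    rw [h1, ← Real.sqrt_mul (by positivity)]
    rw [show (2*π)⁻¹ * (π / (1/2)) = 1 by field_simp]
    exact Real.sqrt_one
  rw [hval] at h0
  linarith




variable {d : ℕ} {Ω : Type*} [MeasurableSpace Ω] {P : Measure Ω} [IsProbabilityMeasure P]
  {u : Ω → EuclideanSpace ℝ (Fin d)}


lemma meas_ui (humeas : Measurable u) (i : Fin d) : Measurable fun ω => u ω i :=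
  (measurable_pi_apply i).comp ((WithLp.measurable_ofLp _ _).comp humeas)

lemma meas_S (humeas : Measurable u) (a : Fin d → ℝ) :
    Measurable fun ω => ∑ i, a i * u ω i :=
  Finset.measurable_sum _ fun i _ => (meas_ui humeas i).const_mul (a i)

lemma int_exp_ui (hucoord : ∀ i : Fin d, Measure.map (fun ω => u ω i) P = gaussianReal 0 1)
    (humeas : Measurable u) (i : Fin d) (c : ℝ) :
    Integrable (fun ω => Real.exp (c * u ω i)) P := by
  have h := gauss_exp_lin_integrable c
  rw [← hucoord i, integrable_map_measure
    (Continuous.aestronglyMeasurable (by fun_prop)) (meas_ui humeas i).aemeasurable] at h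
  exact h

lemma exp_ui_integral (hucoord : ∀ i : Fin d, Measure.map (fun ω => u ω i) P = gaussianReal 0 1)
    (humeas : Measurable u) (i : Fin d) (c : ℝ) :
    ∫ ω, Real.exp (c * u ω i) ∂P = Real.exp (c ^ 2 / 2) := by
  have h := gauss_exp_lin_integral c
  rw [← hucoord i, integral_map (meas_ui humeas i).aemeasurable
    (Continuous.aestronglyMeasurable (by fun_prop))] at h
  exact h

lemma mgf_S (humeas : Measurable u)
    (hucoord : ∀ i : Fin d, Measure.map (fun ω => u ω i) P = gaussianReal 0 1)
    (huindep : iIndepFun (fun i ω => u ω i) P)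
    (a : Fin d → ℝ) (c : ℝ) :
    Integrable (fun ω => Real.exp (c * ∑ i, a i * u ω i)) P ∧
    ∫ ω, Real.exp (c * ∑ i, a i * u ω i) ∂P = Real.exp (c ^ 2 * (∑ i, a i ^ 2) / 2) := by
  classical
  set X : Fin d → Ω → ℝ := fun i ω => a i * u ω i with hX
  have hXindep : iIndepFun X P :=
    huindep.comp (fun i => fun x => a i * x) (fun i => measurable_id.const_mul (a i))
  have hXmeas : ∀ i, Measurable (X i) := fun i => (meas_ui humeas i).const_mul (a i)
  have hXint : ∀ (i : Fin d) (c' : ℝ), Integrable (fun ω => Real.exp (c' * X i ω)) P := by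
    intro i c'
    have : (fun ω => Real.exp (c' * X i ω)) = fun ω => Real.exp ((c' * a i) * u ω i) := by
      funext ω; rw [hX]; ring_nf
    rw [this]
    exact int_exp_ui hucoord humeas i _
  have hsum : ∀ ω, (∑ i, X i) ω = ∑ i, a i * u ω i := by
    intro ω; rw [Finset.sum_apply]
  constructor
  · have h := iIndepFun.integrable_exp_mul_sum hXindep hXmeas
      (s := Finset.univ) (fun i _ => hXint i c)
    refine h.congr (Filter.Eventually.of_forall fun ω => ?_)
    simp only [hsum]
  · have h := iIndepFun.mgf_sum hXindep hXmeas (t := c) Finset.univ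
    have hL : mgf (∑ i, X i) P c = ∫ ω, Real.exp (c * ∑ i, a i * u ω i) ∂P := by
      rw [mgf]
      congr 1 with ω
      simp only [hsum]
    have hR : ∀ i : Fin d, mgf (X i) P c = Real.exp ((c * a i) ^ 2 / 2) := by
      intro i
      rw [mgf]
      have : (fun ω => Real.exp (c * X i ω)) = fun ω => Real.exp ((c * a i) * u ω i) := by
        funext ω; rw [hX]; ring_nf
      rw [show (∫ ω, Real.exp (c * X i ω) ∂P) = ∫ ω, Real.exp ((c * a i) * u ω i) ∂P by rw [this]]
      exact exp_ui_integral hucoord humeas i _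
    rw [hL] at h
    rw [h, Finset.prod_congr rfl fun i _ => hR i, ← Real.exp_sum]
    congr 1
    rw [Finset.mul_sum, ← Finset.sum_div]
    congr 1
    refine Finset.sum_congr rfl fun i _ => ?_
    ring

lemma int_ui (hucoord : ∀ i : Fin d, Measure.map (fun ω => u ω i) P = gaussianReal 0 1)
    (humeas : Measurable u) (i : Fin d) : Integrable (fun ω => u ω i) P := by
  have h := gauss_id_integrable
  rw [← hucoord i, integrable_map_measure
    (Continuous.aestronglyMeasurable (by fun_prop)) (meas_ui humeas i).aemeasurable] at h
  exact h

lemma int_ui_sq (hucoord : ∀ i : Fin d, Measure.map (fun ω => u ω i) P = gaussianReal 0 1)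
    (humeas : Measurable u) (i : Fin d) : Integrable (fun ω => (u ω i) ^ 2) P := by
  have h := gauss_sq_integrable
  rw [← hucoord i, integrable_map_measure
    (Continuous.aestronglyMeasurable (by fun_prop)) (meas_ui humeas i).aemeasurable] at h
  exact h

lemma ui_integral (hucoord : ∀ i : Fin d, Measure.map (fun ω => u ω i) P = gaussianReal 0 1)
    (humeas : Measurable u) (i : Fin d) : ∫ ω, u ω i ∂P = 0 := by
  have h := gauss_id_integral
  rw [← hucoord i, integral_map (meas_ui humeas i).aemeasurable
    (Continuous.aestronglyMeasurable (by fun_prop))] at h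
  exact h

lemma ui_sq_integral (hucoord : ∀ i : Fin d, Measure.map (fun ω => u ω i) P = gaussianReal 0 1)
    (humeas : Measurable u) (i : Fin d) : ∫ ω, (u ω i) ^ 2 ∂P = 1 := by
  have h := gauss_sq_integral
  rw [← hucoord i, integral_map (meas_ui humeas i).aemeasurable
    (Continuous.aestronglyMeasurable (by fun_prop))] at h
  exact h

lemma pair_int (humeas : Measurable u)
    (hucoord : ∀ i : Fin d, Measure.map (fun ω => u ω i) P = gaussianReal 0 1)
    (huindep : iIndepFun (fun i ω => u ω i) P)
    (i j : Fin d) : Integrable (fun ω => u ω i * u ω j) P := by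
  by_cases hij : i = j
  · subst hij
    refine (int_ui_sq hucoord humeas i).congr (Filter.Eventually.of_forall fun ω => ?_)
    ring
  · exact (huindep.indepFun hij).integrable_mul (int_ui hucoord humeas i) (int_ui hucoord humeas j)

lemma pair_integral (humeas : Measurable u)
    (hucoord : ∀ i : Fin d, Measure.map (fun ω => u ω i) P = gaussianReal 0 1)
    (huindep : iIndepFun (fun i ω => u ω i) P)
    (i j : Fin d) : ∫ ω, u ω i * u ω j ∂P = if i = j then 1 else 0 := by
  by_cases hij : i = j
  · subst hij
    simp only [if_true]
    rw [show (∫ ω, u ω i * u ω i ∂P) = ∫ ω, (u ω i) ^ 2 ∂P by congr 1 with ω; ring]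
    exact ui_sq_integral hucoord humeas i
  · simp only [hij, if_false]
    have h := (huindep.indepFun hij).integral_mul_eq_mul_integral
      (int_ui hucoord humeas i).aestronglyMeasurable (int_ui hucoord humeas j).aestronglyMeasurable
    rw [show (∫ ω, u ω i * u ω j ∂P) = ∫ ω, ((fun ω => u ω i) * fun ω => u ω j) ω ∂P from rfl]
    rw [h, ui_integral hucoord humeas i, ui_integral hucoord humeas j, mul_zero]

lemma S_sq_int_and_integral (humeas : Measurable u)
    (hucoord : ∀ i : Fin d, Measure.map (fun ω => u ω i) P = gaussianReal 0 1)
    (huindep : iIndepFun (fun i ω => u ω i) P)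
    (a : Fin d → ℝ) :
    Integrable (fun ω => (∑ i, a i * u ω i) ^ 2) P ∧
    ∫ ω, (∑ i, a i * u ω i) ^ 2 ∂P = ∑ i, a i ^ 2 := by
  classical
  have hexp : ∀ ω, (∑ i, a i * u ω i) ^ 2
      = ∑ i, ∑ j, (a i * a j) * (u ω i * u ω j) := by
    intro ω
    rw [sq, Finset.sum_mul_sum]
    refine Finset.sum_congr rfl fun i _ => Finset.sum_congr rfl fun j _ => by ring
  have hint : ∀ i j : Fin d, Integrable (fun ω => (a i * a j) * (u ω i * u ω j)) P :=
    fun i j => (pair_int humeas hucoord huindep i j).const_mul _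
  constructor
  · have hI : Integrable (fun ω => ∑ i, ∑ j, (a i * a j) * (u ω i * u ω j)) P :=
      integrable_finset_sum _ fun i _ => integrable_finset_sum _ fun j _ => hint i j
    exact hI.congr (Filter.Eventually.of_forall fun ω => (hexp ω).symm)
  · have h1 : ∫ ω, (∑ i, a i * u ω i) ^ 2 ∂P
        = ∑ i, ∑ j, ∫ ω, (a i * a j) * (u ω i * u ω j) ∂P := by
      rw [show (∫ ω, (∑ i, a i * u ω i) ^ 2 ∂P)
          = ∫ ω, ∑ i, ∑ j, (a i * a j) * (u ω i * u ω j) ∂P by congr 1 with ω; rw [hexp]]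
      rw [integral_finset_sum _ fun i _ => integrable_finset_sum _ fun j _ => hint i j]
      exact Finset.sum_congr rfl fun i _ => integral_finset_sum _ fun j _ => hint i j
    rw [h1]
    have h2 : ∀ i j : Fin d, ∫ ω, (a i * a j) * (u ω i * u ω j) ∂P
        = (a i * a j) * if i = j then 1 else 0 := by
      intro i j
      rw [integral_const_mul, pair_integral humeas hucoord huindep i j]
    simp_rw [h2]
    refine Finset.sum_congr rfl fun i _ => ?_
    rw [Finset.sum_eq_single i]
    · simp [sq]
    · intro j _ hj
      simp [Ne.symm hj]
    · intro h; exact absurd (Finset.mem_univ i) h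

lemma exp_sq_S (humeas : Measurable u)
    (hucoord : ∀ i : Fin d, Measure.map (fun ω => u ω i) P = gaussianReal 0 1)
    (huindep : iIndepFun (fun i ω => u ω i) P)
    (a : Fin d → ℝ) {τ : ℝ} (hτ0 : 0 ≤ τ) (hτ : 2 * τ * (∑ i, a i ^ 2) < 1) :
    Integrable (fun ω => Real.exp (τ * (∑ i, a i * u ω i) ^ 2)) P ∧
    ∫ ω, Real.exp (τ * (∑ i, a i * u ω i) ^ 2) ∂P
      = (Real.sqrt (1 - 2 * τ * (∑ i, a i ^ 2)))⁻¹ := by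
  set σ2 := ∑ i, a i ^ 2 with hσ2
  set S := fun ω => ∑ i, a i * u ω i with hSdef
  have hmeasS : Measurable S := meas_S humeas a
  set c := Real.sqrt (2 * τ) with hc
  have hc2 : c ^ 2 = 2 * τ := Real.sq_sqrt (by linarith)
  have hb : τ * σ2 < 1 / 2 := by linarith
  have key : ∫⁻ ω, ENNReal.ofReal (Real.exp (τ * S ω ^ 2)) ∂P
      = ENNReal.ofReal ((Real.sqrt (1 - 2 * τ * σ2))⁻¹) := by
    have step1 : ∀ ω, ENNReal.ofReal (Real.exp (τ * S ω ^ 2))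
        = ∫⁻ y, ENNReal.ofReal (Real.exp (c * S ω * y)) ∂(gaussianReal 0 1) := by
      intro ω
      rw [← ofReal_integral_eq_lintegral_ofReal (gauss_exp_lin_integrable (c * S ω))
        (Filter.Eventually.of_forall fun y => Real.exp_nonneg _)]
      rw [gauss_exp_lin_integral]
      congr 2
      rw [mul_pow, hc2]
      ring
    simp_rw [step1]
    rw [lintegral_lintegral_swap]
    · have inner : ∀ y : ℝ, ∫⁻ ω, ENNReal.ofReal (Real.exp (c * S ω * y)) ∂P
          = ENNReal.ofReal (Real.exp ((τ * σ2) * y ^ 2)) := by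
        intro y
        have h1 : (fun ω => Real.exp (c * S ω * y)) = fun ω => Real.exp ((c * y) * S ω) := by
          funext ω; congr 1; ring
        rw [show (∫⁻ ω, ENNReal.ofReal (Real.exp (c * S ω * y)) ∂P)
            = ∫⁻ ω, ENNReal.ofReal (Real.exp ((c * y) * S ω)) ∂P by
          congr 1 with ω; rw [show c * S ω * y = (c * y) * S ω by ring]]
        rw [← ofReal_integral_eq_lintegral_ofReal
          (mgf_S humeas hucoord huindep a (c * y)).1
          (Filter.Eventually.of_forall fun ω => Real.exp_nonneg _)]
        rw [(mgf_S humeas hucoord huindep a (c * y)).2]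
        congr 2
        rw [mul_pow, hc2]
        ring
      simp_rw [inner]
      rw [← ofReal_integral_eq_lintegral_ofReal (gauss_exp_sq_integrable hb)
        (Filter.Eventually.of_forall fun y => Real.exp_nonneg _)]
      rw [gauss_exp_sq_integral hb]
      congr 2
      ring
    · refine Measurable.aemeasurable ?_
      exact ((((hmeasS.comp measurable_fst).const_mul c).mul measurable_snd).exp).ennreal_ofReal
  have hFnn : 0 ≤ᵐ[P] fun ω => Real.exp (τ * S ω ^ 2) :=
    Filter.Eventually.of_forall fun _ => Real.exp_nonneg _
  have hFmeas : Measurable fun ω => Real.exp (τ * S ω ^ 2) :=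
    ((hmeasS.pow_const 2).const_mul τ).exp
  have hint : Integrable (fun ω => Real.exp (τ * S ω ^ 2)) P := by
    refine ⟨hFmeas.aestronglyMeasurable, ?_⟩
    rw [hasFiniteIntegral_iff_ofReal hFnn]
    rw [key]
    exact ENNReal.ofReal_lt_top
  refine ⟨hint, ?_⟩
  rw [integral_eq_lintegral_of_nonneg_ae hFnn hFmeas.aestronglyMeasurable, key,
    ENNReal.toReal_ofReal (by positivity)]

lemma S_four (humeas : Measurable u)
    (hucoord : ∀ i : Fin d, Measure.map (fun ω => u ω i) P = gaussianReal 0 1)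
    (huindep : iIndepFun (fun i ω => u ω i) P)
    (a : Fin d → ℝ) (hσ : 0 < ∑ i, a i ^ 2) :
    Integrable (fun ω => (∑ i, a i * u ω i) ^ 4) P ∧
    ∫ ω, (∑ i, a i * u ω i) ^ 4 ∂P ≤ 8 * (∑ i, a i ^ 2) ^ 2 := by
  set σ2 := ∑ i, a i ^ 2 with hσ2def
  set S := fun ω => ∑ i, a i * u ω i with hSdef
  set τ0 : ℝ := (4 * σ2)⁻¹ with hτ0def
  have hτ0 : 0 < τ0 := by rw [hτ0def]; positivity
  have hτσ : τ0 * σ2 = 1 / 4 := by rw [hτ0def]; field_simp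
  have h2τ : 2 * τ0 * σ2 < 1 := by
    rw [show 2 * τ0 * σ2 = 2 * (τ0 * σ2) by ring, hτσ]; norm_num
  have hE := exp_sq_S humeas hucoord huindep a hτ0.le h2τ
  have hE1 : Integrable (fun ω => Real.exp (τ0 * S ω ^ 2)) P := hE.1
  have hE2 : ∫ ω, Real.exp (τ0 * S ω ^ 2) ∂P = (Real.sqrt (1 - 2 * τ0 * σ2))⁻¹ := hE.2
  have hEval : ∫ ω, Real.exp (τ0 * S ω ^ 2) ∂P = Real.sqrt 2 := by
    rw [hE2, show (1:ℝ) - 2 * τ0 * σ2 = 2⁻¹ by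
      rw [show 2 * τ0 * σ2 = 2 * (τ0 * σ2) by ring, hτσ]; norm_num, Real.sqrt_inv, inv_inv]
  have hmeasS : Measurable S := meas_S humeas a
  have hint4 : Integrable (fun ω => S ω ^ 4) P := by
    refine Integrable.mono' (hE1.const_mul (2 / τ0 ^ 2))
      ((hmeasS.pow_const 4).aestronglyMeasurable)
      (Filter.Eventually.of_forall fun ω => ?_)
    have h := sq_div_two_le_exp (mul_nonneg hτ0.le (sq_nonneg (S ω)))
    have h4 : (0:ℝ) ≤ S ω ^ 4 := by positivity
    rw [Real.norm_eq_abs, abs_of_nonneg h4]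
    have hτ2 : 0 < τ0 ^ 2 := by positivity
    have h5 : τ0 ^ 2 * S ω ^ 4 ≤ 2 * Real.exp (τ0 * S ω ^ 2) := by nlinarith [h]
    calc S ω ^ 4 = (τ0 ^ 2 * S ω ^ 4) / τ0 ^ 2 := by field_simp
      _ ≤ (2 * Real.exp (τ0 * S ω ^ 2)) / τ0 ^ 2 := by
          exact (div_le_div_iff_of_pos_right hτ2).mpr h5
      _ = 2 / τ0 ^ 2 * Real.exp (τ0 * S ω ^ 2) := by ring
  refine ⟨hint4, ?_⟩
  have hS2 := S_sq_int_and_integral humeas hucoord huindep a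
  have hS21 : Integrable (fun ω => S ω ^ 2) P := hS2.1
  have hS22 : ∫ ω, S ω ^ 2 ∂P = σ2 := hS2.2
  have hpt : ∀ ω, 1 + τ0 * S ω ^ 2 + (τ0 ^ 2 / 2) * S ω ^ 4 ≤ Real.exp (τ0 * S ω ^ 2) := by
    intro ω
    have := quad_le_exp (mul_nonneg hτ0.le (sq_nonneg (S ω)))
    nlinarith [this]
  have hC1 : Integrable (fun ω => 1 + τ0 * S ω ^ 2) P :=
    (integrable_const 1).add (hS21.const_mul τ0)
  have hC2 : Integrable (fun ω => (τ0 ^ 2 / 2) * S ω ^ 4) P := hint4.const_mul _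
  have hintL : Integrable (fun ω => 1 + τ0 * S ω ^ 2 + (τ0 ^ 2 / 2) * S ω ^ 4) P := hC1.add hC2
  have hmono := integral_mono hintL hE1 hpt
  rw [hEval] at hmono
  have hsplit : ∫ ω, (1 + τ0 * S ω ^ 2 + (τ0 ^ 2 / 2) * S ω ^ 4) ∂P
      = 1 + τ0 * σ2 + (τ0 ^ 2 / 2) * ∫ ω, S ω ^ 4 ∂P := by
    rw [integral_add hC1 hC2,
      integral_add (integrable_const 1) (hS21.const_mul τ0), integral_const,
      integral_const_mul, integral_const_mul, hS22]
    simp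
  rw [hsplit, hτσ] at hmono
  have hsqrt2 : Real.sqrt 2 ≤ 3 / 2 := by
    nlinarith [Real.sq_sqrt (show (0:ℝ) ≤ 2 by norm_num), Real.sqrt_nonneg 2]
  have hτ2σ : τ0 ^ 2 * σ2 ^ 2 = 1 / 16 := by
    rw [hτ0def]
    field_simp
    ring
  have hI4 : (0:ℝ) ≤ ∫ ω, S ω ^ 4 ∂P := integral_nonneg fun ω => by positivity
  nlinarith [hmono, hτ2σ, hI4, sq_nonneg σ2, hτ0]

lemma pos_factor (humeas : Measurable u)
    (hucoord : ∀ i : Fin d, Measure.map (fun ω => u ω i) P = gaussianReal 0 1)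
    (huindep : iIndepFun (fun i ω => u ω i) P)
    (a : Fin d → ℝ) {c : ℝ} (hc0 : 0 ≤ c) (hx : c * (∑ i, a i ^ 2) ≤ 1 / 4) :
    Integrable (fun ω => Real.exp (c * ((∑ i, a i * u ω i) ^ 2 - ∑ i, a i ^ 2))) P ∧
    ∫ ω, Real.exp (c * ((∑ i, a i * u ω i) ^ 2 - ∑ i, a i ^ 2)) ∂P
      ≤ Real.exp (4 * (c * ∑ i, a i ^ 2) ^ 2) := by
  set σ2 := ∑ i, a i ^ 2 with hσ2def
  set S := fun ω => ∑ i, a i * u ω i with hSdef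
  have h2 : 2 * c * σ2 < 1 := by linarith
  have hE := exp_sq_S humeas hucoord huindep a hc0 h2
  have hE1 : Integrable (fun ω => Real.exp (c * S ω ^ 2)) P := hE.1
  have hE2 : ∫ ω, Real.exp (c * S ω ^ 2) ∂P = (Real.sqrt (1 - 2 * c * σ2))⁻¹ := hE.2
  have hsplit : ∀ ω, Real.exp (c * (S ω ^ 2 - σ2))
      = Real.exp (-(c * σ2)) * Real.exp (c * S ω ^ 2) := by
    intro ω
    rw [← Real.exp_add]
    congr 1
    ring
  constructor
  · refine (hE1.const_mul (Real.exp (-(c * σ2)))).congr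
      (Filter.Eventually.of_forall fun ω => (hsplit ω).symm)
  · have hre : ∫ ω, Real.exp (c * (S ω ^ 2 - σ2)) ∂P
        = Real.exp (-(c * σ2)) * ∫ ω, Real.exp (c * S ω ^ 2) ∂P := by
      rw [show (∫ ω, Real.exp (c * (S ω ^ 2 - σ2)) ∂P)
          = ∫ ω, Real.exp (-(c * σ2)) * Real.exp (c * S ω ^ 2) ∂P by
        exact integral_congr_ae (Filter.Eventually.of_forall fun ω => hsplit ω)]
      exact integral_const_mul _ _
    rw [hre, hE2]
    have hpos : (0:ℝ) < Real.sqrt (1 - 2 * c * σ2) := Real.sqrt_pos.mpr (by linarith)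
    rw [← div_eq_mul_inv, div_le_iff₀ hpos]
    calc Real.exp (-(c * σ2)) ≤ Real.sqrt (1 - 2 * (c * σ2)) * Real.exp (4 * (c * σ2) ^ 2) :=
          key_scalar hx
      _ = Real.exp (4 * (c * σ2) ^ 2) * Real.sqrt (1 - 2 * c * σ2) := by
          rw [mul_comm]; ring_nf
  
lemma neg_factor (humeas : Measurable u)
    (hucoord : ∀ i : Fin d, Measure.map (fun ω => u ω i) P = gaussianReal 0 1)
    (huindep : iIndepFun (fun i ω => u ω i) P)
    (a : Fin d → ℝ) {τ : ℝ} (hτ0 : 0 ≤ τ) :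
    Integrable (fun ω => Real.exp (-τ * ((∑ i, a i * u ω i) ^ 2 - ∑ i, a i ^ 2))) P ∧
    ∫ ω, Real.exp (-τ * ((∑ i, a i * u ω i) ^ 2 - ∑ i, a i ^ 2)) ∂P
      ≤ Real.exp (4 * (τ * ∑ i, a i ^ 2) ^ 2) := by
  set σ2 := ∑ i, a i ^ 2 with hσ2def
  set S := fun ω => ∑ i, a i * u ω i with hSdef
  have hσ2nn : 0 ≤ σ2 := Finset.sum_nonneg fun i _ => sq_nonneg _
  have hmeasS : Measurable S := meas_S humeas a
  have hbd : ∀ ω, ‖Real.exp (-τ * (S ω ^ 2 - σ2))‖ ≤ Real.exp (τ * σ2) := by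
    intro ω
    rw [Real.norm_eq_abs, abs_of_nonneg (Real.exp_nonneg _)]
    apply Real.exp_le_exp.mpr
    nlinarith [sq_nonneg (S ω)]
  have hintF : Integrable (fun ω => Real.exp (-τ * (S ω ^ 2 - σ2))) P := by
    refine Integrable.mono' (integrable_const (Real.exp (τ * σ2)))
      ((((hmeasS.pow_const 2).sub_const σ2).const_mul (-τ)).exp.aestronglyMeasurable)
      (Filter.Eventually.of_forall hbd)
  refine ⟨hintF, ?_⟩
  rcases eq_or_lt_of_le hσ2nn with hz | hσpos
  · -- σ2 = 0 : all a i = 0, S = 0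
    have ha0 : ∀ i, a i = 0 := by
      intro i
      have h := (Finset.sum_eq_zero_iff_of_nonneg
        (fun j (_ : j ∈ Finset.univ) => sq_nonneg (a j))).mp hz.symm i (Finset.mem_univ i)
      exact pow_eq_zero_iff two_ne_zero |>.mp h
    have hS0 : ∀ ω, S ω = 0 := by
      intro ω
      rw [hSdef]
      exact Finset.sum_eq_zero fun i _ => by rw [ha0 i, zero_mul]
    have : ∀ ω, Real.exp (-τ * (S ω ^ 2 - σ2)) = 1 := by
      intro ω
      rw [hS0 ω, ← hz]
      norm_num
    rw [integral_congr_ae (Filter.Eventually.of_forall this)]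
    simp only [integral_const, measure_univ, probReal_univ, ENNReal.toReal_one, smul_eq_mul, mul_one, one_smul]
    exact Real.one_le_exp (by positivity)
  · -- σ2 > 0
    have hS2 := S_sq_int_and_integral humeas hucoord huindep a
    have hS21 : Integrable (fun ω => S ω ^ 2) P := hS2.1
    have hS22 : ∫ ω, S ω ^ 2 ∂P = σ2 := hS2.2
    have hS4 := S_four humeas hucoord huindep a hσpos
    have hS41 : Integrable (fun ω => S ω ^ 4) P := hS4.1
    have hS42 : ∫ ω, S ω ^ 4 ∂P ≤ 8 * σ2 ^ 2 := hS4.2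
    have hsplit : ∀ ω, Real.exp (-τ * (S ω ^ 2 - σ2))
        = Real.exp (τ * σ2) * Real.exp (-(τ * S ω ^ 2)) := by
      intro ω
      rw [← Real.exp_add]
      congr 1
      ring
    have hintE : Integrable (fun ω => Real.exp (-(τ * S ω ^ 2))) P := by
      refine Integrable.mono' (integrable_const 1)
        (((hmeasS.pow_const 2).const_mul τ).neg.exp.aestronglyMeasurable)
        (Filter.Eventually.of_forall fun ω => ?_)
      rw [Real.norm_eq_abs, abs_of_nonneg (Real.exp_nonneg _)]
      exact Real.exp_le_one_iff.mpr (by nlinarith [sq_nonneg (S ω)])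
    have hre : ∫ ω, Real.exp (-τ * (S ω ^ 2 - σ2)) ∂P
        = Real.exp (τ * σ2) * ∫ ω, Real.exp (-(τ * S ω ^ 2)) ∂P := by
      rw [show (∫ ω, Real.exp (-τ * (S ω ^ 2 - σ2)) ∂P)
          = ∫ ω, Real.exp (τ * σ2) * Real.exp (-(τ * S ω ^ 2)) ∂P by
        exact integral_congr_ae (Filter.Eventually.of_forall fun ω => hsplit ω)]
      exact integral_const_mul _ _
    rw [hre]
    have hquad : ∀ ω, Real.exp (-(τ * S ω ^ 2))
        ≤ 1 - τ * S ω ^ 2 + (τ ^ 2 / 2) * S ω ^ 4 := by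
      intro ω
      have := exp_neg_le_quad (mul_nonneg hτ0 (sq_nonneg (S ω)))
      nlinarith [this]
    have hD1 : Integrable (fun ω => 1 - τ * S ω ^ 2) P :=
      (integrable_const 1).sub (hS21.const_mul τ)
    have hD2 : Integrable (fun ω => (τ ^ 2 / 2) * S ω ^ 4) P := hS41.const_mul _
    have hintQ : Integrable (fun ω => 1 - τ * S ω ^ 2 + (τ ^ 2 / 2) * S ω ^ 4) P := hD1.add hD2
    have hmono := integral_mono hintE hintQ hquad
    have hQval : ∫ ω, (1 - τ * S ω ^ 2 + (τ ^ 2 / 2) * S ω ^ 4) ∂P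
        = 1 - τ * σ2 + (τ ^ 2 / 2) * ∫ ω, S ω ^ 4 ∂P := by
      rw [integral_add hD1 hD2,
        integral_sub (integrable_const 1) (hS21.const_mul τ), integral_const,
        integral_const_mul, integral_const_mul, hS22]
      simp
    rw [hQval] at hmono
    have hEbound : ∫ ω, Real.exp (-(τ * S ω ^ 2)) ∂P ≤ 1 - τ * σ2 + 4 * (τ * σ2) ^ 2 := by
      refine hmono.trans ?_
      nlinarith [hS42, sq_nonneg τ]
    calc Real.exp (τ * σ2) * ∫ ω, Real.exp (-(τ * S ω ^ 2)) ∂P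
        ≤ Real.exp (τ * σ2) * (1 - τ * σ2 + 4 * (τ * σ2) ^ 2) := by
          exact mul_le_mul_of_nonneg_left hEbound (Real.exp_nonneg _)
      _ ≤ Real.exp (τ * σ2) * Real.exp (-(τ * σ2) + 4 * (τ * σ2) ^ 2) := by
          refine mul_le_mul_of_nonneg_left ?_ (Real.exp_nonneg _)
          have := Real.add_one_le_exp (-(τ * σ2) + 4 * (τ * σ2) ^ 2)
          linarith
      _ = Real.exp (4 * (τ * σ2) ^ 2) := by
          rw [← Real.exp_add]
          congr 1
          ring

lemma inner_sum_eq (x y : EuclideanSpace ℝ (Fin d)) :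
    (inner ℝ x y : ℝ) = ∑ i, x i * y i := by
  simp [PiLp.inner_apply, RCLike.inner_apply, conj_trivial, mul_comm]

set_option maxHeartbeats 2000000 in
lemma main_nonneg
    (humeas : Measurable u)
    (hucoord : ∀ i : Fin d, Measure.map (fun ω => u ω i) P = gaussianReal 0 1)
    (huindep : iIndepFun (fun i ω => u ω i) P)
    (v w : EuclideanSpace ℝ (Fin d)) (hv : ‖v‖ = 1) (hw : w ≠ 0)
    (φ : ℝ) (hφ : φ ^ 2 ≤ 1 / (64 * ‖w‖ ^ 2)) (hφ0 : 0 ≤ φ) :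
    ∫ ω, Real.exp (φ * ((inner ℝ (u ω) w : ℝ) * (inner ℝ (u ω) v : ℝ) - (inner ℝ w v : ℝ))) ∂P
      ≤ Real.exp (4 * φ ^ 2 * ‖w‖ ^ 2) := by
  classical
  set s : ℝ := ‖w‖ with hsdef
  have hs : 0 < s := by rw [hsdef]; exact norm_pos_iff.mpr hw
  have hs' : s ≠ 0 := ne_of_gt hs
  have hinner : ∀ x y : EuclideanSpace ℝ (Fin d), (inner ℝ x y : ℝ) = ∑ i, x i * y i :=
    fun x y => inner_sum_eq x y
  have hw2 : ∑ i, w i * w i = s ^ 2 := by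
    have h1 : (inner ℝ w w : ℝ) = ‖w‖ ^ 2 := real_inner_self_eq_norm_sq w
    rw [hinner w w, ← hsdef] at h1
    exact h1
  have hv2 : ∑ i, v i * v i = 1 := by
    have h1 : (inner ℝ v v : ℝ) = ‖v‖ ^ 2 := real_inner_self_eq_norm_sq v
    rw [hinner v v, hv] at h1
    rw [h1]; norm_num
  set C : ℝ := ∑ i, w i * v i with hCdef
  set a : Fin d → ℝ := fun i => w i / s + v i with hadef
  set b : Fin d → ℝ := fun i => w i / s - v i with hbdef
  set σa : ℝ := ∑ i, a i ^ 2 with hσadef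
  set σb : ℝ := ∑ i, b i ^ 2 with hσbdef
  have hσaval : σa = 2 + 2 * C / s := by
    rw [hσadef]
    simp only [hadef]
    have expand : ∀ i : Fin d, (w i / s + v i) ^ 2
        = (1 / s ^ 2) * (w i * w i) + (2 / s) * (w i * v i) + v i * v i := by
      intro i; field_simp; ring
    simp_rw [expand]
    rw [Finset.sum_add_distrib, Finset.sum_add_distrib, ← Finset.mul_sum, ← Finset.mul_sum,
      hw2, hv2, ← hCdef]
    field_simp
    ring
  have hσbval : σb = 2 - 2 * C / s := by
    rw [hσbdef]
    simp only [hbdef]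
    have expand : ∀ i : Fin d, (w i / s - v i) ^ 2
        = (1 / s ^ 2) * (w i * w i) - (2 / s) * (w i * v i) + v i * v i := by
      intro i; field_simp; ring
    simp_rw [expand]
    rw [Finset.sum_add_distrib, Finset.sum_sub_distrib, ← Finset.mul_sum, ← Finset.mul_sum,
      hw2, hv2, ← hCdef]
    field_simp
    ring
  have hσa0 : 0 ≤ σa := by rw [hσadef]; exact Finset.sum_nonneg fun i _ => sq_nonneg _
  have hσb0 : 0 ≤ σb := by rw [hσbdef]; exact Finset.sum_nonneg fun i _ => sq_nonneg _
  have hσsum : σa + σb = 4 := by rw [hσaval, hσbval]; ring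
  set t : ℝ := φ * s / 4 with htdef
  have ht0 : 0 ≤ t := by
    rw [htdef]; exact div_nonneg (mul_nonneg hφ0 hs.le) (by norm_num)
  have hφs : φ * s ≤ 1 / 8 := by
    have h2 : φ ^ 2 * s ^ 2 ≤ (1 / (64 * s ^ 2)) * s ^ 2 :=
      mul_le_mul_of_nonneg_right hφ (sq_nonneg s)
    have h3 : (1 / (64 * s ^ 2)) * s ^ 2 = 1 / 64 := by field_simp
    have h1 : (φ * s) ^ 2 ≤ 1 / 64 := by rw [h3] at h2; nlinarith [h2]
    nlinarith [mul_nonneg hφ0 hs.le]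
  have ht : t ≤ 1 / 32 := by rw [htdef]; linarith
  -- pointwise identity
  have hSa : ∀ ω, ∑ i, a i * u ω i = (∑ i, u ω i * w i) / s + ∑ i, u ω i * v i := by
    intro ω
    simp only [hadef]
    rw [Finset.sum_div, ← Finset.sum_add_distrib]
    refine Finset.sum_congr rfl fun i _ => ?_
    field_simp
  have hSb : ∀ ω, ∑ i, b i * u ω i = (∑ i, u ω i * w i) / s - ∑ i, u ω i * v i := by
    intro ω
    simp only [hbdef]
    rw [Finset.sum_div, ← Finset.sum_sub_distrib]
    refine Finset.sum_congr rfl fun i _ => ?_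
    field_simp
  have hid : ∀ ω, φ * ((inner ℝ (u ω) w : ℝ) * (inner ℝ (u ω) v : ℝ) - (inner ℝ w v : ℝ))
      = t * ((∑ i, a i * u ω i) ^ 2 - σa) + (-t) * ((∑ i, b i * u ω i) ^ 2 - σb) := by
    intro ω
    rw [hinner (u ω) w, hinner (u ω) v, hinner w v, ← hCdef, hSa ω, hSb ω, hσaval, hσbval,
      htdef]
    field_simp
    ring
  have hrew : ∫ ω, Real.exp (φ * ((inner ℝ (u ω) w : ℝ) * (inner ℝ (u ω) v : ℝ) - (inner ℝ w v : ℝ))) ∂P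
      = ∫ ω, Real.exp (t * ((∑ i, a i * u ω i) ^ 2 - σa))
          * Real.exp ((-t) * ((∑ i, b i * u ω i) ^ 2 - σb)) ∂P := by
    refine integral_congr_ae (Filter.Eventually.of_forall fun ω => ?_)
    show Real.exp (φ * ((inner ℝ (u ω) w : ℝ) * (inner ℝ (u ω) v : ℝ) - (inner ℝ w v : ℝ))) = _
    rw [hid ω, Real.exp_add]
  rw [hrew]
  have hRHS : Real.exp (4 * φ ^ 2 * s ^ 2) = Real.exp (4 * (4 * t) ^ 2) := by
    rw [htdef]; congr 1; field_simp
  rw [hRHS]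
  have hma : Measurable fun ω => (∑ i, a i * u ω i) := meas_S humeas a
  have hmb : Measurable fun ω => (∑ i, b i * u ω i) := meas_S humeas b
  by_cases hbz : σb = 0
  · -- b = 0 case
    have hb0 : ∀ i, b i = 0 := by
      intro i
      have h := (Finset.sum_eq_zero_iff_of_nonneg
        (fun j (_ : j ∈ Finset.univ) => sq_nonneg (b j))).mp (hσbdef.symm.trans hbz) i
        (Finset.mem_univ i)
      exact pow_eq_zero_iff two_ne_zero |>.mp h
    have hSb0 : ∀ ω, (∑ i, b i * u ω i) = 0 := by
      intro ω
      exact Finset.sum_eq_zero fun i _ => by rw [hb0 i, zero_mul]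
    have h1 : ∀ ω, Real.exp (t * ((∑ i, a i * u ω i) ^ 2 - σa))
        * Real.exp ((-t) * ((∑ i, b i * u ω i) ^ 2 - σb))
        = Real.exp (t * ((∑ i, a i * u ω i) ^ 2 - σa)) := by
      intro ω
      rw [hSb0 ω, hbz]
      norm_num
    rw [integral_congr_ae (Filter.Eventually.of_forall fun ω => h1 ω)]
    have hσa4 : σa = 4 := by linarith
    have hx : t * σa ≤ 1 / 4 := by rw [hσa4]; linarith
    have hP := (pos_factor humeas hucoord huindep a ht0 (by rw [← hσadef]; exact hx)).2
    refine hP.trans (le_of_eq ?_)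
    rw [← hσadef, hσa4]
    congr 1
    ring
  by_cases haz : σa = 0
  · -- a = 0 case
    have ha0 : ∀ i, a i = 0 := by
      intro i
      have h := (Finset.sum_eq_zero_iff_of_nonneg
        (fun j (_ : j ∈ Finset.univ) => sq_nonneg (a j))).mp (hσadef.symm.trans haz) i
        (Finset.mem_univ i)
      exact pow_eq_zero_iff two_ne_zero |>.mp h
    have hSa0 : ∀ ω, (∑ i, a i * u ω i) = 0 := by
      intro ω
      exact Finset.sum_eq_zero fun i _ => by rw [ha0 i, zero_mul]
    have h1 : ∀ ω, Real.exp (t * ((∑ i, a i * u ω i) ^ 2 - σa))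
        * Real.exp ((-t) * ((∑ i, b i * u ω i) ^ 2 - σb))
        = Real.exp (-t * ((∑ i, b i * u ω i) ^ 2 - σb)) := by
      intro ω
      rw [hSa0 ω, haz]
      norm_num
    rw [integral_congr_ae (Filter.Eventually.of_forall fun ω => h1 ω)]
    have hσb4 : σb = 4 := by linarith
    have hQ := (neg_factor humeas hucoord huindep b (τ := t) ht0).2
    rw [← hσbdef] at hQ
    refine hQ.trans (le_of_eq ?_)
    rw [hσb4]
    congr 1
    ring
  · -- Hölder case
    have hσapos : 0 < σa := lt_of_le_of_ne hσa0 (Ne.symm haz)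
    have hσbpos : 0 < σb := lt_of_le_of_ne hσb0 (Ne.symm hbz)
    set p : ℝ := 4 / σa with hpdef
    set q : ℝ := 4 / σb with hqdef
    have hppos : 0 < p := by rw [hpdef]; positivity
    have hqpos : 0 < q := by rw [hqdef]; positivity
    have hpq : Real.HolderConjugate p q := by
      rw [Real.holderConjugate_iff]
      constructor
      · rw [hpdef]
        rw [lt_div_iff₀ hσapos]
        linarith
      · rw [hpdef, hqdef, inv_div, inv_div, ← add_div, hσsum]
        norm_num
    have hpt4 : p * t * σa = 4 * t := by
      rw [hpdef, show 4 / σa * t * σa = 4 * t * (σa / σa) by ring,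
        div_self (ne_of_gt hσapos), mul_one]
    have hqt4 : q * t * σb = 4 * t := by
      rw [hqdef, show 4 / σb * t * σb = 4 * t * (σb / σb) by ring,
        div_self (ne_of_gt hσbpos), mul_one]
    have hP := pos_factor humeas hucoord huindep a (c := p * t)
      (mul_nonneg hppos.le ht0)
      (by rw [← hσadef, hpt4]; linarith)
    have hQ := neg_factor humeas hucoord huindep b (τ := q * t)
      (mul_nonneg hqpos.le ht0)
    rw [← hσadef] at hP
    rw [← hσbdef] at hQ
    have hPbound : ∫ ω, Real.exp ((p * t) * ((∑ i, a i * u ω i) ^ 2 - σa)) ∂P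
        ≤ Real.exp (4 * (4 * t) ^ 2) := by
      refine hP.2.trans (le_of_eq ?_)
      rw [show p * t * σa = 4 * t from hpt4]
    have hQbound : ∫ ω, Real.exp (-(q * t) * ((∑ i, b i * u ω i) ^ 2 - σb)) ∂P
        ≤ Real.exp (4 * (4 * t) ^ 2) := by
      refine hQ.2.trans (le_of_eq ?_)
      rw [show q * t * σb = 4 * t from hqt4]
    set F₁ : Ω → ℝ := fun ω => Real.exp (t * ((∑ i, a i * u ω i) ^ 2 - σa)) with hF1def
    set F₂ : Ω → ℝ := fun ω => Real.exp ((-t) * ((∑ i, b i * u ω i) ^ 2 - σb)) with hF2def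
    have hF1m : Measurable F₁ := (((hma.pow_const 2).sub_const σa).const_mul t).exp
    have hF2m : Measurable F₂ := (((hmb.pow_const 2).sub_const σb).const_mul (-t)).exp
    have hnn : 0 ≤ᵐ[P] fun ω => F₁ ω * F₂ ω :=
      Filter.Eventually.of_forall fun ω => mul_nonneg (Real.exp_nonneg _) (Real.exp_nonneg _)
    rw [integral_eq_lintegral_of_nonneg_ae hnn ((hF1m.mul hF2m).aestronglyMeasurable)]
    refine ENNReal.toReal_le_of_le_ofReal (Real.exp_nonneg _) ?_
    have e1 : ∫⁻ ω, (ENNReal.ofReal (F₁ ω)) ^ p ∂P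
        ≤ ENNReal.ofReal (Real.exp (4 * (4 * t) ^ 2)) := by
      have hptw : ∀ ω, (ENNReal.ofReal (F₁ ω)) ^ p
          = ENNReal.ofReal (Real.exp ((p * t) * ((∑ i, a i * u ω i) ^ 2 - σa))) := by
        intro ω
        rw [ENNReal.ofReal_rpow_of_nonneg (show (0:ℝ) ≤ F₁ ω from Real.exp_nonneg _) hppos.le]
        congr 1
        show Real.exp (t * ((∑ i, a i * u ω i) ^ 2 - σa)) ^ p = _
        rw [← Real.exp_mul]
        congr 1
        ring
      rw [lintegral_congr hptw,
        ← ofReal_integral_eq_lintegral_ofReal hP.1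
          (Filter.Eventually.of_forall fun ω => Real.exp_nonneg _)]
      exact ENNReal.ofReal_le_ofReal hPbound
    have e2 : ∫⁻ ω, (ENNReal.ofReal (F₂ ω)) ^ q ∂P
        ≤ ENNReal.ofReal (Real.exp (4 * (4 * t) ^ 2)) := by
      have hptw : ∀ ω, (ENNReal.ofReal (F₂ ω)) ^ q
          = ENNReal.ofReal (Real.exp (-(q * t) * ((∑ i, b i * u ω i) ^ 2 - σb))) := by
        intro ω
        rw [ENNReal.ofReal_rpow_of_nonneg (show (0:ℝ) ≤ F₂ ω from Real.exp_nonneg _) hqpos.le]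
        congr 1
        show Real.exp ((-t) * ((∑ i, b i * u ω i) ^ 2 - σb)) ^ q = _
        rw [← Real.exp_mul]
        congr 1
        ring
      rw [lintegral_congr hptw,
        ← ofReal_integral_eq_lintegral_ofReal hQ.1
          (Filter.Eventually.of_forall fun ω => Real.exp_nonneg _)]
      exact ENNReal.ofReal_le_ofReal hQbound
    have hRne : ENNReal.ofReal (Real.exp (4 * (4 * t) ^ 2)) ≠ 0 :=
      (ENNReal.ofReal_pos.mpr (Real.exp_pos _)).ne'
    have hRnt : ENNReal.ofReal (Real.exp (4 * (4 * t) ^ 2)) ≠ ⊤ := ENNReal.ofReal_ne_top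
    calc ∫⁻ ω, ENNReal.ofReal (F₁ ω * F₂ ω) ∂P
        = ∫⁻ ω, ((fun ω => ENNReal.ofReal (F₁ ω)) * fun ω => ENNReal.ofReal (F₂ ω)) ω ∂P := by
          refine lintegral_congr fun ω => ?_
          rw [Pi.mul_apply, ENNReal.ofReal_mul (Real.exp_nonneg _)]
      _ ≤ (∫⁻ ω, (ENNReal.ofReal (F₁ ω)) ^ p ∂P) ^ (1 / p)
            * (∫⁻ ω, (ENNReal.ofReal (F₂ ω)) ^ q ∂P) ^ (1 / q) :=
          ENNReal.lintegral_mul_le_Lp_mul_Lq P hpq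
            (hF1m.ennreal_ofReal.aemeasurable) (hF2m.ennreal_ofReal.aemeasurable)
      _ ≤ (ENNReal.ofReal (Real.exp (4 * (4 * t) ^ 2))) ^ (1 / p)
            * (ENNReal.ofReal (Real.exp (4 * (4 * t) ^ 2))) ^ (1 / q) :=
          mul_le_mul' (ENNReal.rpow_le_rpow e1 (by positivity))
            (ENNReal.rpow_le_rpow e2 (by positivity))
      _ = ENNReal.ofReal (Real.exp (4 * (4 * t) ^ 2)) := by
          rw [← ENNReal.rpow_add _ _ hRne hRnt,
            show 1 / p + 1 / q = 1 by
              rw [one_div, one_div]; exact hpq.inv_add_inv_eq_one,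
            ENNReal.rpow_one]

end GQM


/-- Lemma 1, part (iii) of the paper: for a standard Gaussian vector `u` on `ℝ^d`
(coordinates i.i.d. `N(0,1)`), a unit vector `v`, and `w ≠ 0`, one has for every `φ`
with `φ² ≤ 1/(64‖w‖²)`:
`E[exp(φ(⟨u,w⟩⟨u,v⟩ − ⟨w,v⟩))] ≤ exp(4φ²‖w‖²)`.
This verifies sub-exponential Assumption 3 for the linear regression model with
`α₂ = √8`, `ρ₂ = 8` (taking `w = θ − θ*`). -/
theorem gaussian_quadratic_mgf
    (d : ℕ)
    (Ω : Type*) [MeasurableSpace Ω] (P : Measure Ω) [IsProbabilityMeasure P]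
    (u : Ω → EuclideanSpace ℝ (Fin d)) (humeas : Measurable u)
    (hucoord : ∀ i : Fin d, Measure.map (fun ω => u ω i) P = gaussianReal 0 1)
    (huindep : iIndepFun (fun i ω => u ω i) P)
    (v w : EuclideanSpace ℝ (Fin d)) (hv : ‖v‖ = 1) (hw : w ≠ 0)
    (φ : ℝ) (hφ : φ ^ 2 ≤ 1 / (64 * ‖w‖ ^ 2)) :
    ∫ ω, Real.exp (φ * (⟪u ω, w⟫ * ⟪u ω, v⟫ - ⟪w, v⟫)) ∂P
      ≤ Real.exp (4 * φ ^ 2 * ‖w‖ ^ 2) := by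
  rcases le_or_gt 0 φ with hφ0 | hφ0
  · exact GQM.main_nonneg humeas hucoord huindep v w hv hw φ hφ hφ0
  · have hv' : ‖(-v : EuclideanSpace ℝ (Fin d))‖ = 1 := by rw [norm_neg]; exact hv
    have hφ' : (-φ) ^ 2 ≤ 1 / (64 * ‖w‖ ^ 2) := by rw [neg_sq]; exact hφ
    have h := GQM.main_nonneg humeas hucoord huindep (-v) w hv' hw (-φ) hφ' (by linarith)
    have hcong : ∀ ω : Ω, φ * (⟪u ω, w⟫ * ⟪u ω, v⟫ - ⟪w, v⟫)
        = (-φ) * ((inner ℝ (u ω) w : ℝ) * (inner ℝ (u ω) (-v) : ℝ) - (inner ℝ w (-v) : ℝ)) := by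
      intro ω
      rw [inner_neg_right, inner_neg_right]
      ring
    calc ∫ ω, Real.exp (φ * (⟪u ω, w⟫ * ⟪u ω, v⟫ - ⟪w, v⟫)) ∂P
        = ∫ ω, Real.exp ((-φ) * ((inner ℝ (u ω) w : ℝ) * (inner ℝ (u ω) (-v) : ℝ)
            - (inner ℝ w (-v) : ℝ))) ∂P := by
          refine integral_congr_ae (Filter.Eventually.of_forall fun ω => ?_)
          exact congrArg Real.exp (hcong ω)
      _ ≤ Real.exp (4 * (-φ) ^ 2 * ‖w‖ ^ 2) := h
      _ = Real.exp (4 * φ ^ 2 * ‖w‖ ^ 2) := by rw [neg_sq]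
end GQMAux
end
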